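/- arXiv:2009.13504 — 4 statements merged into one kernel-verified Lean document; each statement's English description precedes it below -/
import Mathlib

section
/- Let (X, A, Y) be jointly distributed random variables where A and Y take values in {0,1} and X takes values in a measurable space, with 0 < Pr(A = 0) < 1. Let D_a denote the conditional distribution of X given A = a for a ∈ {0,1}. Let g be a measurable map from the X-space into a normed space Z with ∥g(x)∥ ≤ R almost surely, let C > 0, and let h : Z → ℝ be C-Lipschitz with h(g(X)) ∈ {0,1} almost surely. Define δ := | Pr(Y = 1 | A = 0) − Pr(Y = 1 | A = 1) | and the group-conditional misclassification errors ε_a := Pr( h(g(X)) ≠ Y | A = a ) for a ∈ {0,1}. Then ε_0 + ε_1 ≥ δ − C · W1(g♯D_0, g♯D_1) ≥ δ − 2RC · Adv(F), where F is the class of all measurable functions f : Z → {0,1} and Adv(F) is the adversarial advantage computed with respect to the pushforward measures g♯D_0 and g♯D_1. -/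
open MeasureTheory ProbabilityTheory
open scoped NNReal

/-- The Wasserstein-1 distance between two measures on a (pseudo)metric space,
via its Kantorovich dual formulation:
`W1(μ, ν) = sup over 1-Lipschitz φ : Ω → ℝ of |∫ φ dμ - ∫ φ dν|`. -/
noncomputable def W1 {Ω : Type*} [MeasurableSpace Ω] [PseudoMetricSpace Ω]
    (μ ν : Measure Ω) : ℝ :=
  ⨆ φ : {φ : Ω → ℝ // LipschitzWith 1 φ}, |∫ z, φ.1 z ∂μ - ∫ z, φ.1 z ∂ν|

/-- The adversarial advantage of the class of all measurable binary predictors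
`f : Z → {0,1}` with respect to the measures `μ0, μ1`:
`Adv = sup_f |μ1(f = 1) - μ0(f = 1)|`. -/
noncomputable def advAll {Z : Type*} [MeasurableSpace Z] (μ0 μ1 : Measure Z) : ℝ :=
  ⨆ f : {f : Z → Bool // Measurable f},
    |(μ1 {z | f.1 z = true}).toReal - (μ0 {z | f.1 z = true}).toReal|

section Helpers

lemma abs_diff_le_advAll {Z : Type*} [MeasurableSpace Z] (ν0 ν1 : Measure Z)
    [IsProbabilityMeasure ν0] [IsProbabilityMeasure ν1] {S : Set Z} (hS : MeasurableSet S) :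
    |(ν1 S).toReal - (ν0 S).toReal| ≤ advAll ν0 ν1 := by
  classical
  have hbdd : BddAbove (Set.range fun f : {f : Z → Bool // Measurable f} =>
      |(ν1 {z | f.1 z = true}).toReal - (ν0 {z | f.1 z = true}).toReal|) := by
    refine ⟨1, ?_⟩
    rintro x ⟨f, rfl⟩
    have h1 : (ν1 {z | f.1 z = true}).toReal ≤ 1 := by
      simpa using ENNReal.toReal_mono ENNReal.one_ne_top (prob_le_one (μ := ν1))
    have h0 : (ν0 {z | f.1 z = true}).toReal ≤ 1 := by
      simpa using ENNReal.toReal_mono ENNReal.one_ne_top (prob_le_one (μ := ν0))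
    have h1' : 0 ≤ (ν1 {z | f.1 z = true}).toReal := ENNReal.toReal_nonneg
    have h0' : 0 ≤ (ν0 {z | f.1 z = true}).toReal := ENNReal.toReal_nonneg
    rw [abs_sub_le_iff]; constructor <;> linarith
  have key := le_ciSup hbdd (⟨fun z => decide (z ∈ S), measurable_to_bool (by
      convert hS using 1; ext z; simp)⟩ : {f : Z → Bool // Measurable f})
  have : {z | decide (z ∈ S) = true} = S := by ext z; simp
  rw [advAll]; simpa [this] using key

variable {Z : Type*} [NormedAddCommGroup Z] [MeasurableSpace Z] [BorelSpace Z]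

omit [MeasurableSpace Z] [BorelSpace Z] in
lemma lip_abs_sub_le {φ : Z → ℝ} (hφ : LipschitzWith 1 φ) (z : Z) :
    |φ z - φ 0| ≤ ‖z‖ := by
  have := hφ.dist_le_mul z 0
  simpa [Real.dist_eq, dist_zero_right] using this

lemma lip_integrable (ν : Measure Z) [IsProbabilityMeasure ν] {R : ℝ}
    (hb : ∀ᵐ z ∂ν, ‖z‖ ≤ R) {φ : Z → ℝ} (hφ : LipschitzWith 1 φ) :
    Integrable φ ν := by
  refine Integrable.mono' (integrable_const (|φ 0| + R))
    hφ.continuous.measurable.aestronglyMeasurable ?_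
  filter_upwards [hb] with z hz
  have h1 := lip_abs_sub_le hφ z
  rw [Real.norm_eq_abs]
  have := abs_sub_abs_le_abs_sub (φ z) (φ 0)
  linarith

lemma lip_integral_dist_le (ν : Measure Z) [IsProbabilityMeasure ν] {R : ℝ}
    (hb : ∀ᵐ z ∂ν, ‖z‖ ≤ R) {φ : Z → ℝ} (hφ : LipschitzWith 1 φ) :
    |∫ z, φ z ∂ν - φ 0| ≤ R := by
  have hint := lip_integrable ν hb hφ
  have h1 : ∫ z, φ z ∂ν - φ 0 = ∫ z, (φ z - φ 0) ∂ν := by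
    rw [integral_sub hint (integrable_const _), integral_const]; simp
  rw [h1]
  calc |∫ z, (φ z - φ 0) ∂ν| ≤ ∫ z, |φ z - φ 0| ∂ν := by
        simpa [Real.norm_eq_abs] using norm_integral_le_integral_norm
          (fun z => φ z - φ 0) (μ := ν)
    _ ≤ ∫ (_ : Z), R ∂ν := by
        refine integral_mono_ae ((hint.sub (integrable_const _)).abs) (integrable_const _) ?_
        filter_upwards [hb] with z hz using (lip_abs_sub_le hφ z).trans hz
    _ = R := by simp

lemma lip_integral_diff_le (ν0 ν1 : Measure Z) [IsProbabilityMeasure ν0] [IsProbabilityMeasure ν1]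
    {R : ℝ} (h0 : ∀ᵐ z ∂ν0, ‖z‖ ≤ R) (h1 : ∀ᵐ z ∂ν1, ‖z‖ ≤ R)
    {φ : Z → ℝ} (hφ : LipschitzWith 1 φ) :
    |∫ z, φ z ∂ν0 - ∫ z, φ z ∂ν1| ≤ 2 * R := by
  have a0 := lip_integral_dist_le ν0 h0 hφ
  have a1 := lip_integral_dist_le ν1 h1 hφ
  have := abs_sub_le (∫ z, φ z ∂ν0) (φ 0) (∫ z, φ z ∂ν1)
  rw [abs_sub_comm (φ 0)] at this
  linarith

lemma lip_diff_le_adv (ν0 ν1 : Measure Z) [IsProbabilityMeasure ν0] [IsProbabilityMeasure ν1]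
    {R : ℝ} (hR : 0 ≤ R) (h0 : ∀ᵐ z ∂ν0, ‖z‖ ≤ R) (h1 : ∀ᵐ z ∂ν1, ‖z‖ ≤ R)
    {φ : Z → ℝ} (hφ : LipschitzWith 1 φ) :
    |∫ z, φ z ∂ν0 - ∫ z, φ z ∂ν1| ≤ 2 * R * advAll ν0 ν1 := by
  classical
  set f : Z → ℝ := fun z => max (min (φ z - φ 0 + R) (2 * R)) 0 with hf_def
  have hf_meas : Measurable f := by
    exact ((((hφ.continuous.measurable.sub measurable_const).add measurable_const).min
      measurable_const).max measurable_const)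
  have hf_nn : ∀ z, 0 ≤ f z := fun z => le_max_right _ _
  have hf_le : ∀ z, f z ≤ 2 * R := fun z =>
    max_le ((min_le_right _ _)) (by linarith)
  have hf_ae : ∀ (ν : Measure Z), (∀ᵐ z ∂ν, ‖z‖ ≤ R) →
      f =ᵐ[ν] fun z => φ z - φ 0 + R := by
    intro ν hb
    filter_upwards [hb] with z hz
    have habs := lip_abs_sub_le hφ z
    have h1' : φ z - φ 0 + R ≤ 2 * R := by
      have : φ z - φ 0 ≤ R := le_trans (le_abs_self _) (habs.trans hz)
      linarith
    have h2' : 0 ≤ φ z - φ 0 + R := by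
      have : -(φ z - φ 0) ≤ R := le_trans (neg_le_abs _) (habs.trans hz)
      linarith
    simp [hf_def, min_eq_left h1', max_eq_left h2']
  have hf_int : ∀ (ν : Measure Z) [IsProbabilityMeasure ν], Integrable f ν := by
    intro ν _
    refine Integrable.mono' (integrable_const (2 * R)) hf_meas.aestronglyMeasurable ?_
    filter_upwards with z
    rw [Real.norm_eq_abs, abs_of_nonneg (hf_nn z)]; exact hf_le z
  have hanti : ∀ (ν : Measure Z), Antitone (fun t : ℝ => ν {z | t < f z}) :=
    fun ν s t hst => measure_mono (fun z hz => lt_of_le_of_lt hst hz)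
  have hGint : ∀ (ν : Measure Z) [IsProbabilityMeasure ν],
      IntegrableOn (fun t => (ν {z | t < f z}).toReal) (Set.Ioc 0 (2 * R)) := by
    intro ν _
    refine Integrable.mono' (integrable_const 1)
      ((hanti ν).measurable.ennreal_toReal.aestronglyMeasurable) ?_
    filter_upwards with t
    rw [Real.norm_eq_abs, abs_of_nonneg ENNReal.toReal_nonneg]
    simpa using ENNReal.toReal_mono ENNReal.one_ne_top (prob_le_one (μ := ν))
  have hlc : ∀ (ν : Measure Z) [IsProbabilityMeasure ν],
      ∫ z, f z ∂ν = ∫ t in Set.Ioc 0 (2 * R), (ν {z | t < f z}).toReal := by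
    intro ν _
    rw [(hf_int ν).integral_eq_integral_meas_lt (Filter.Eventually.of_forall hf_nn)]
    have hsplit : Set.Ioi (0 : ℝ) = Set.Ioc 0 (2 * R) ∪ Set.Ioi (2 * R) := by
      rw [Set.Ioc_union_Ioi_eq_Ioi (by linarith)]
    have hzero : ∀ t ∈ Set.Ioi (2 * R), (ν {z | t < f z}).toReal = 0 := by
      intro t ht
      have : {z | t < f z} = ∅ := by
        ext z; simp only [Set.mem_setOf_eq, Set.mem_empty_iff_false, iff_false, not_lt]
        exact (hf_le z).trans (le_of_lt ht)
      simp [this]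
    rw [hsplit, setIntegral_union (by simp [Set.disjoint_left]) measurableSet_Ioi]
    · simp only [measureReal_def]; rw [setIntegral_congr_fun measurableSet_Ioi hzero]
      simp
    · exact hGint ν
    · refine (integrable_congr ?_).mpr (integrable_zero _ _ _)
      exact (ae_restrict_iff' measurableSet_Ioi).mpr (Filter.Eventually.of_forall hzero)
  have hdiff : ∫ z, φ z ∂ν0 - ∫ z, φ z ∂ν1 = ∫ z, f z ∂ν0 - ∫ z, f z ∂ν1 := by
    have e : ∀ (ν : Measure Z) [IsProbabilityMeasure ν], Integrable φ ν →
        ∫ a, (φ a - φ 0 + R) ∂ν = (∫ a, φ a ∂ν) - φ 0 + R := by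
      intro ν _ hint
      have e1 : ∫ a, (φ a - φ 0 + R) ∂ν
          = (∫ a, (φ a - φ 0) ∂ν) + ∫ (_ : Z), R ∂ν :=
        integral_add (hint.sub (integrable_const _)) (integrable_const _)
      have e2 : ∫ a, (φ a - φ 0) ∂ν = (∫ a, φ a ∂ν) - ∫ (_ : Z), φ 0 ∂ν :=
        integral_sub hint (integrable_const _)
      rw [e1, e2]; simp
    rw [integral_congr_ae (hf_ae ν0 h0), integral_congr_ae (hf_ae ν1 h1),
        e ν0 (lip_integrable ν0 h0 hφ), e ν1 (lip_integrable ν1 h1 hφ)]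
    ring
  rw [hdiff, hlc ν0, hlc ν1, ← integral_sub (hGint ν0) (hGint ν1)]
  calc |∫ t in Set.Ioc 0 (2*R), ((ν0 {z | t < f z}).toReal - (ν1 {z | t < f z}).toReal)|
      ≤ ∫ t in Set.Ioc 0 (2*R), |(ν0 {z | t < f z}).toReal - (ν1 {z | t < f z}).toReal| := by
        simpa [Real.norm_eq_abs] using norm_integral_le_integral_norm
          (fun t => (ν0 {z | t < f z}).toReal - (ν1 {z | t < f z}).toReal)
          (μ := volume.restrict (Set.Ioc 0 (2*R)))
    _ ≤ ∫ _t in Set.Ioc 0 (2*R), advAll ν0 ν1 := by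
        refine integral_mono_ae ((hGint ν0).sub (hGint ν1)).abs (integrable_const _) ?_
        filter_upwards with t
        rw [abs_sub_comm]
        exact abs_diff_le_advAll ν0 ν1 (measurableSet_lt measurable_const hf_meas)
    _ = 2 * R * advAll ν0 ν1 := by
        rw [setIntegral_const, smul_eq_mul, Real.volume_real_Ioc_of_le (by linarith)]
        ring

lemma W1_bddAbove (ν0 ν1 : Measure Z) [IsProbabilityMeasure ν0] [IsProbabilityMeasure ν1]
    {R : ℝ} (h0 : ∀ᵐ z ∂ν0, ‖z‖ ≤ R) (h1 : ∀ᵐ z ∂ν1, ‖z‖ ≤ R) :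
    BddAbove (Set.range fun φ : {φ : Z → ℝ // LipschitzWith 1 φ} =>
      |∫ z, φ.1 z ∂ν0 - ∫ z, φ.1 z ∂ν1|) := by
  refine ⟨2 * R, ?_⟩
  rintro x ⟨φ, rfl⟩
  exact lip_integral_diff_le ν0 ν1 h0 h1 φ.2

lemma W1_le_two_mul_adv (ν0 ν1 : Measure Z) [IsProbabilityMeasure ν0] [IsProbabilityMeasure ν1]
    {R : ℝ} (hR : 0 ≤ R) (h0 : ∀ᵐ z ∂ν0, ‖z‖ ≤ R) (h1 : ∀ᵐ z ∂ν1, ‖z‖ ≤ R) :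
    W1 ν0 ν1 ≤ 2 * R * advAll ν0 ν1 := by
  have : Nonempty {φ : Z → ℝ // LipschitzWith 1 φ} :=
    ⟨⟨fun _ => 0, (LipschitzWith.const 0).weaken zero_le_one⟩⟩
  exact ciSup_le fun φ => lip_diff_le_adv ν0 ν1 hR h0 h1 φ.2

/-- Binary a.e. functions: integral difference bounded by disagreement probability. -/
lemma err_bound {Ω : Type*} [MeasurableSpace Ω] (μ : Measure Ω) [IsProbabilityMeasure μ]
    {u v : Ω → ℝ} (hu : Measurable u) (hv : Measurable v)
    (hu01 : ∀ ω, u ω = 0 ∨ u ω = 1) (hv01 : ∀ᵐ ω ∂μ, v ω = 0 ∨ v ω = 1) :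
    |∫ ω, u ω ∂μ - ∫ ω, v ω ∂μ| ≤ (μ {ω | v ω ≠ u ω}).toReal := by
  have hS : MeasurableSet {ω | v ω ≠ u ω} := by
    have : {ω | v ω ≠ u ω} = {ω | v ω = u ω}ᶜ := by ext ω; simp
    rw [this]; exact (measurableSet_eq_fun hv hu).compl
  have hui : Integrable u μ := by
    refine Integrable.mono' (integrable_const 1) hu.aestronglyMeasurable ?_
    filter_upwards with ω
    rcases hu01 ω with h | h <;> simp [h]
  have hvi : Integrable v μ := by
    refine Integrable.mono' (integrable_const 1) hv.aestronglyMeasurable ?_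
    filter_upwards [hv01] with ω hω
    rcases hω with h | h <;> simp [h]
  rw [← integral_sub hui hvi]
  calc |∫ ω, (u ω - v ω) ∂μ| ≤ ∫ ω, |u ω - v ω| ∂μ := by
        simpa [Real.norm_eq_abs] using norm_integral_le_integral_norm
          (fun ω => u ω - v ω) (μ := μ)
    _ ≤ ∫ ω, ({ω | v ω ≠ u ω}).indicator (fun _ => (1:ℝ)) ω ∂μ := by
        refine integral_mono_ae ((hui.sub hvi).abs)
          ((integrable_const (1:ℝ)).indicator hS) ?_
        filter_upwards [hv01] with ω hω
        by_cases hne : v ω ≠ u ω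
        · rw [Set.indicator_of_mem (show ω ∈ {ω | v ω ≠ u ω} from hne)]
          rcases hu01 ω with h1 | h1 <;> rcases hω with h2 | h2 <;>
            simp [h1, h2]
        · push_neg at hne
          rw [Set.indicator_of_notMem (show ω ∉ {ω | v ω ≠ u ω} by simpa using hne)]
          simp [hne]
    _ = (μ {ω | v ω ≠ u ω}).toReal := integral_indicator_one hS

end Helpers

/-- Trade-off between accuracy and information obfuscation
(Theorem 3.2 of the paper). Let `(X, A, Y)` be jointly distributed with `A, Y`
binary and `0 < Pr(A = 0) < 1`; let `D_a` be the conditional law of `X` given `A = a`;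
let `g` be a measurable encoder into a normed space with `‖g(X)‖ ≤ R` a.s., and
`h` a `C`-Lipschitz predictor with `h(g(X)) ∈ {0,1}` a.s. With
`δ = |Pr(Y = 1 | A = 0) - Pr(Y = 1 | A = 1)|` and group errors
`ε_a = Pr(h(g(X)) ≠ Y | A = a)`, we have
`ε_0 + ε_1 ≥ δ - C·W1(g♯D_0, g♯D_1) ≥ δ - 2RC·Adv(F_A)`. -/
theorem tradeoff_lower_bound {Ω 𝒳 Z : Type*} [MeasurableSpace Ω] [MeasurableSpace 𝒳]
    [NormedAddCommGroup Z] [MeasurableSpace Z] [BorelSpace Z]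
    (P : Measure Ω) [IsProbabilityMeasure P]
    (X : Ω → 𝒳) (A : Ω → Bool) (Y : Ω → Bool)
    (hX : Measurable X) (hA : Measurable A) (hY : Measurable Y)
    (hA0 : 0 < P (A ⁻¹' {false})) (hA1 : P (A ⁻¹' {false}) < 1)
    (g : 𝒳 → Z) (hg : Measurable g) (R : ℝ)
    (hR : ∀ᵐ ω ∂P, ‖g (X ω)‖ ≤ R)
    (C : ℝ≥0) (hC : 0 < C) (h : Z → ℝ) (hh : LipschitzWith C h)
    (hh01 : ∀ᵐ ω ∂P, h (g (X ω)) = 0 ∨ h (g (X ω)) = 1) :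
    ((P[|A ⁻¹' {false}]) {ω | h (g (X ω)) ≠ (if Y ω then (1 : ℝ) else 0)}).toReal +
      ((P[|A ⁻¹' {true}]) {ω | h (g (X ω)) ≠ (if Y ω then (1 : ℝ) else 0)}).toReal ≥
      |((P[|A ⁻¹' {false}]) (Y ⁻¹' {true})).toReal -
        ((P[|A ⁻¹' {true}]) (Y ⁻¹' {true})).toReal| -
        (C : ℝ) * W1 (((P[|A ⁻¹' {false}]).map X).map g) (((P[|A ⁻¹' {true}]).map X).map g)
    ∧
    |((P[|A ⁻¹' {false}]) (Y ⁻¹' {true})).toReal -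
        ((P[|A ⁻¹' {true}]) (Y ⁻¹' {true})).toReal| -
        (C : ℝ) * W1 (((P[|A ⁻¹' {false}]).map X).map g) (((P[|A ⁻¹' {true}]).map X).map g) ≥
      |((P[|A ⁻¹' {false}]) (Y ⁻¹' {true})).toReal -
        ((P[|A ⁻¹' {true}]) (Y ⁻¹' {true})).toReal| -
        2 * R * (C : ℝ) *
          advAll (((P[|A ⁻¹' {false}]).map X).map g) (((P[|A ⁻¹' {true}]).map X).map g) := by
  classical
  set μ0 := P[|A ⁻¹' {false}] with hμ0_def
  set μ1 := P[|A ⁻¹' {true}] with hμ1_def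
  -- probability measure instances
  haveI : IsProbabilityMeasure μ0 := cond_isProbabilityMeasure hA0.ne'
  have hAtrue : A ⁻¹' {true} = (A ⁻¹' {false})ᶜ := by
    ext ω; cases hb : A ω <;> simp [hb]
  have hPtrue : P (A ⁻¹' {true}) ≠ 0 := by
    rw [hAtrue, prob_compl_eq_one_sub (hA (measurableSet_singleton false))]
    intro hzero
    exact absurd (tsub_eq_zero_iff_le.mp hzero) (not_le.mpr hA1)
  haveI : IsProbabilityMeasure μ1 := cond_isProbabilityMeasure hPtrue
  -- pushforwards
  have hmap0 : (μ0.map X).map g = μ0.map (g ∘ X) := Measure.map_map hg hX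
  have hmap1 : (μ1.map X).map g = μ1.map (g ∘ X) := Measure.map_map hg hX
  set ν0 := μ0.map (g ∘ X) with hν0_def
  set ν1 := μ1.map (g ∘ X) with hν1_def
  haveI : IsProbabilityMeasure ν0 := Measure.isProbabilityMeasure_map (hg.comp hX).aemeasurable
  haveI : IsProbabilityMeasure ν1 := Measure.isProbabilityMeasure_map (hg.comp hX).aemeasurable
  -- a.e. transfers to conditional measures
  have hac0 : μ0 ≪ P := cond_absolutelyContinuous
  have hac1 : μ1 ≪ P := cond_absolutelyContinuous
  have hR0 : ∀ᵐ ω ∂μ0, ‖g (X ω)‖ ≤ R := hac0.ae_le hR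
  have hR1 : ∀ᵐ ω ∂μ1, ‖g (X ω)‖ ≤ R := hac1.ae_le hR
  have hball : MeasurableSet {z : Z | ‖z‖ ≤ R} :=
    measurableSet_le measurable_norm measurable_const
  have hνR0 : ∀ᵐ z ∂ν0, ‖z‖ ≤ R :=
    (ae_map_iff (hg.comp hX).aemeasurable hball).mpr hR0
  have hνR1 : ∀ᵐ z ∂ν1, ‖z‖ ≤ R :=
    (ae_map_iff (hg.comp hX).aemeasurable hball).mpr hR1
  -- R is nonnegative
  have hRnn : 0 ≤ R := by
    haveI : (ae P).NeBot := ae_neBot.mpr (IsProbabilityMeasure.ne_zero P)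
    obtain ⟨ω, hω⟩ := hR.exists
    exact (norm_nonneg _).trans hω
  -- notation
  set Yr : Ω → ℝ := fun ω => if Y ω then (1 : ℝ) else 0 with hYr_def
  set hgX : Ω → ℝ := fun ω => h (g (X ω)) with hhgX_def
  have hYr_meas : Measurable Yr := Measurable.ite (hY (measurableSet_singleton true))
    measurable_const measurable_const
  have hYr01 : ∀ ω, Yr ω = 0 ∨ Yr ω = 1 := by
    intro ω; by_cases hb : Y ω <;> simp [hYr_def, hb]
  have hhgX_meas : Measurable hgX := hh.continuous.measurable.comp (hg.comp hX)
  have hh01_0 : ∀ᵐ ω ∂μ0, hgX ω = 0 ∨ hgX ω = 1 := hac0.ae_le hh01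
  have hh01_1 : ∀ᵐ ω ∂μ1, hgX ω = 0 ∨ hgX ω = 1 := hac1.ae_le hh01
  -- m_a as integrals of Yr
  have hm : ∀ (μ : Measure Ω) [IsProbabilityMeasure μ],
      (μ (Y ⁻¹' {true})).toReal = ∫ ω, Yr ω ∂μ := by
    intro μ _
    have hind : Yr = (Y ⁻¹' {true}).indicator (1 : Ω → ℝ) := by
      funext ω; by_cases hb : Y ω <;> simp [hYr_def, Set.indicator_apply, hb]
    rw [hind, integral_indicator_one (hY (measurableSet_singleton true))]; rfl
  -- error bounds
  have herr0 : |∫ ω, Yr ω ∂μ0 - ∫ ω, hgX ω ∂μ0| ≤ (μ0 {ω | hgX ω ≠ Yr ω}).toReal :=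
    err_bound μ0 hYr_meas hhgX_meas hYr01 hh01_0
  have herr1 : |∫ ω, Yr ω ∂μ1 - ∫ ω, hgX ω ∂μ1| ≤ (μ1 {ω | hgX ω ≠ Yr ω}).toReal :=
    err_bound μ1 hYr_meas hhgX_meas hYr01 hh01_1
  -- push the h-integrals to Z
  have hpush0 : ∫ ω, hgX ω ∂μ0 = ∫ z, h z ∂ν0 :=
    (integral_map (hg.comp hX).aemeasurable hh.continuous.aestronglyMeasurable).symm
  have hpush1 : ∫ ω, hgX ω ∂μ1 = ∫ z, h z ∂ν1 :=
    (integral_map (hg.comp hX).aemeasurable hh.continuous.aestronglyMeasurable).symm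
  -- |∫ h dν0 - ∫ h dν1| ≤ C * W1
  have hCpos : (0:ℝ) < (C:ℝ) := hC
  have hlipφ : LipschitzWith 1 (fun z => (C:ℝ)⁻¹ * h z) := by
    refine LipschitzWith.of_dist_le_mul fun a b => ?_
    have hd := hh.dist_le_mul a b
    rw [Real.dist_eq] at hd ⊢
    have : |(C:ℝ)⁻¹ * h a - (C:ℝ)⁻¹ * h b| = (C:ℝ)⁻¹ * |h a - h b| := by
      rw [← mul_sub, abs_mul, abs_of_nonneg (by positivity)]
    rw [this]
    calc (C:ℝ)⁻¹ * |h a - h b| ≤ (C:ℝ)⁻¹ * ((C:ℝ) * dist a b) := by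
          refine mul_le_mul_of_nonneg_left ?_ (by positivity)
          simpa [Real.dist_eq] using hd
      _ = 1 * dist a b := by field_simp
  have hW1bdd := W1_bddAbove ν0 ν1 hνR0 hνR1
  have hW1ge : |∫ z, (fun z => (C:ℝ)⁻¹ * h z) z ∂ν0 - ∫ z, (fun z => (C:ℝ)⁻¹ * h z) z ∂ν1|
      ≤ W1 ν0 ν1 := le_ciSup hW1bdd (⟨_, hlipφ⟩ : {φ : Z → ℝ // LipschitzWith 1 φ})
  have hHdiff : |∫ z, h z ∂ν0 - ∫ z, h z ∂ν1| ≤ (C:ℝ) * W1 ν0 ν1 := by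
    have e0 : ∫ z, (C:ℝ)⁻¹ * h z ∂ν0 = (C:ℝ)⁻¹ * ∫ z, h z ∂ν0 := integral_const_mul _ _
    have e1 : ∫ z, (C:ℝ)⁻¹ * h z ∂ν1 = (C:ℝ)⁻¹ * ∫ z, h z ∂ν1 := integral_const_mul _ _
    simp only [e0, e1, ← mul_sub, abs_mul, abs_of_nonneg (le_of_lt (inv_pos.mpr hCpos))] at hW1ge
    calc |∫ z, h z ∂ν0 - ∫ z, h z ∂ν1|
        = (C:ℝ) * ((C:ℝ)⁻¹ * |∫ z, h z ∂ν0 - ∫ z, h z ∂ν1|) := by field_simp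
      _ ≤ (C:ℝ) * W1 ν0 ν1 := mul_le_mul_of_nonneg_left hW1ge (le_of_lt hCpos)
  -- W1 ≤ 2R * adv
  have hW1adv : W1 ν0 ν1 ≤ 2 * R * advAll ν0 ν1 :=
    W1_le_two_mul_adv ν0 ν1 hRnn hνR0 hνR1
  rw [hmap0, hmap1]
  constructor
  · -- first inequality
    have habs : |(μ0 (Y ⁻¹' {true})).toReal - (μ1 (Y ⁻¹' {true})).toReal| ≤
        (μ0 {ω | hgX ω ≠ Yr ω}).toReal + (C:ℝ) * W1 ν0 ν1
          + (μ1 {ω | hgX ω ≠ Yr ω}).toReal := by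
      rw [hm μ0, hm μ1]
      have t1 := abs_sub_le (∫ ω, Yr ω ∂μ0) (∫ ω, hgX ω ∂μ0) (∫ ω, Yr ω ∂μ1)
      have t2 := abs_sub_le (∫ ω, hgX ω ∂μ0) (∫ ω, hgX ω ∂μ1) (∫ ω, Yr ω ∂μ1)
      have h3 : |∫ ω, hgX ω ∂μ0 - ∫ ω, hgX ω ∂μ1| ≤ (C:ℝ) * W1 ν0 ν1 := by
        rw [hpush0, hpush1]; exact hHdiff
      have herr1' : |∫ ω, hgX ω ∂μ1 - ∫ ω, Yr ω ∂μ1| ≤ (μ1 {ω | hgX ω ≠ Yr ω}).toReal := by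
        rw [abs_sub_comm]; exact herr1
      linarith
    have e0 : (μ0 {ω | h (g (X ω)) ≠ (if Y ω then (1:ℝ) else 0)}).toReal
        = (μ0 {ω | hgX ω ≠ Yr ω}).toReal := rfl
    have e1 : (μ1 {ω | h (g (X ω)) ≠ (if Y ω then (1:ℝ) else 0)}).toReal
        = (μ1 {ω | hgX ω ≠ Yr ω}).toReal := rfl
    rw [ge_iff_le, sub_le_iff_le_add, e0, e1]
    linarith
  · -- second inequality
    have : (C:ℝ) * W1 ν0 ν1 ≤ 2 * R * (C:ℝ) * advAll ν0 ν1 := by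
      calc (C:ℝ) * W1 ν0 ν1 ≤ (C:ℝ) * (2 * R * advAll ν0 ν1) :=
            mul_le_mul_of_nonneg_left hW1adv (le_of_lt hCpos)
        _ = 2 * R * (C:ℝ) * advAll ν0 ν1 := by ring
    linarith
end

section
/- Let (X, A, Y) be jointly distributed random variables where A and Y take values in {0,1} and X takes values in a measurable space, with 0 < Pr(A = 0) < 1, and set α := Pr(A = 0). Let D_a denote the conditional distribution of X given A = a for a ∈ {0,1}. Let g be a measurable map from the X-space into a normed space Z with ∥g(x)∥ ≤ R almost surely, let C > 0, and let h : Z → ℝ be C-Lipschitz with h(g(X)) ∈ {0,1} almost surely. Define δ := | Pr(Y = 1 | A = 0) − Pr(Y = 1 | A = 1) |. Then the overall misclassification error satisfies Pr( h(g(X)) ≠ Y ) ≥ min{α, 1−α} · ( δ − C · W1(g♯D_0, g♯D_1) ) ≥ min{α, 1−α} · ( δ − 2RC · Adv(F) ), where F is the class of all measurable functions f : Z → {0,1} and Adv(F) is the adversarial advantage computed with respect to the pushforward measures g♯D_0 and g♯D_1. -/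
open MeasureTheory ProbabilityTheory Set
open scoped NNReal

lemma toReal_prob_le_one {α : Type*} [MeasurableSpace α] {μ : Measure α}
    [IsProbabilityMeasure μ] (s : Set α) : (μ s).toReal ≤ 1 := by
  have h := prob_le_one (μ := μ) (s := s)
  have := ENNReal.toReal_mono (by simp) h
  simpa using this

lemma advAll_bddAbove {Z : Type*} [MeasurableSpace Z] (μ0 μ1 : Measure Z)
    [IsProbabilityMeasure μ0] [IsProbabilityMeasure μ1] :
    BddAbove (Set.range fun f : {f : Z → Bool // Measurable f} =>
      |(μ1 {z | f.1 z = true}).toReal - (μ0 {z | f.1 z = true}).toReal|) := by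
  refine ⟨1, ?_⟩
  rintro x ⟨f, rfl⟩
  have h0 : (μ0 {z | f.1 z = true}).toReal ≤ 1 := toReal_prob_le_one _
  have h1 : (μ1 {z | f.1 z = true}).toReal ≤ 1 := toReal_prob_le_one _
  have h0' : 0 ≤ (μ0 {z | f.1 z = true}).toReal := ENNReal.toReal_nonneg
  have h1' : 0 ≤ (μ1 {z | f.1 z = true}).toReal := ENNReal.toReal_nonneg
  rw [abs_sub_le_iff]
  constructor <;> linarith

lemma advAll_nonneg {Z : Type*} [MeasurableSpace Z] (μ0 μ1 : Measure Z) :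
    0 ≤ advAll μ0 μ1 :=
  Real.iSup_nonneg fun _ => abs_nonneg _

/-- Key lemma: for probability measures supported (a.e.) in the ball of radius `R`,
the integral of any 1-Lipschitz function differs between the two measures by at most
`2R` times the adversarial advantage. -/
lemma abs_integral_sub_le_adv {Z : Type*} [NormedAddCommGroup Z] [MeasurableSpace Z]
    [BorelSpace Z] (μ ν : Measure Z) [IsProbabilityMeasure μ] [IsProbabilityMeasure ν]
    {R : ℝ} (hR0 : 0 ≤ R) (hμ : ∀ᵐ z ∂μ, ‖z‖ ≤ R) (hν : ∀ᵐ z ∂ν, ‖z‖ ≤ R)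
    {φ : Z → ℝ} (hφ : LipschitzWith 1 φ) :
    |∫ z, φ z ∂μ - ∫ z, φ z ∂ν| ≤ 2 * R * advAll μ ν := by
  have hφc : Continuous φ := hφ.continuous
  have habs : ∀ z : Z, |φ z - φ 0| ≤ ‖z‖ := by
    intro z
    have h2 := hφ.dist_le_mul z 0
    rwa [Real.dist_eq, dist_zero_right, NNReal.coe_one, one_mul] at h2
  set ψ : Z → ℝ := fun z => max 0 (min (φ z - φ 0 + R) (2 * R)) with hψdef
  have hψc : Continuous ψ :=
    continuous_const.max (((hφc.sub continuous_const).add continuous_const).min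
      continuous_const)
  have hψ0 : ∀ z, 0 ≤ ψ z := fun z => le_max_left _ _
  have hψ2R : ∀ z, ψ z ≤ 2 * R := fun z => max_le (by linarith) (min_le_right _ _)
  have hψeq : ∀ z : Z, ‖z‖ ≤ R → ψ z = φ z - φ 0 + R := by
    intro z hz
    have h1 := habs z
    have h2 := abs_le.1 (le_trans h1 hz)
    rw [hψdef]
    simp only
    rw [min_eq_left (by linarith), max_eq_right (by linarith)]
  have hψμ : ψ =ᵐ[μ] fun z => φ z - φ 0 + R := hμ.mono fun z hz => hψeq z hz
  have hψν : ψ =ᵐ[ν] fun z => φ z - φ 0 + R := hν.mono fun z hz => hψeq z hz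
  have hφint : ∀ (m : Measure Z), IsProbabilityMeasure m → (∀ᵐ z ∂m, ‖z‖ ≤ R) →
      Integrable φ m := by
    intro m _ hm
    refine Integrable.mono' (integrable_const (|φ 0| + R)) hφc.aestronglyMeasurable ?_
    filter_upwards [hm] with z hz
    have h1 := habs z
    have h2 : |φ z| ≤ |φ z - φ 0| + |φ 0| := by
      calc |φ z| = |(φ z - φ 0) + φ 0| := by ring_nf
      _ ≤ |φ z - φ 0| + |φ 0| := abs_add_le _ _
    rw [Real.norm_eq_abs]
    linarith
  have hφintμ := hφint μ inferInstance hμ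
  have hφintν := hφint ν inferInstance hν
  have hψint : ∀ (m : Measure Z), IsProbabilityMeasure m → Integrable ψ m := by
    intro m _
    refine Integrable.mono' (integrable_const (2 * R)) hψc.aestronglyMeasurable ?_
    refine ae_of_all _ fun z => ?_
    rw [Real.norm_eq_abs, abs_of_nonneg (hψ0 z)]
    exact hψ2R z
  have hψintμ := hψint μ inferInstance
  have hψintν := hψint ν inferInstance
  have hIcalc : ∀ (m : Measure Z), IsProbabilityMeasure m → Integrable φ m →
      (ψ =ᵐ[m] fun z => φ z - φ 0 + R) →
      ∫ z, ψ z ∂m = ∫ z, φ z ∂m - φ 0 + R := by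
    intro m hmP hmint hae
    rw [integral_congr_ae hae]
    rw [show (fun z => φ z - φ 0 + R) = fun z => φ z + (R - φ 0) by funext z; ring]
    rw [integral_add hmint (integrable_const _), integral_const]
    simp [measure_univ]
    ring
  have hIμ := hIcalc μ inferInstance hφintμ hψμ
  have hIν := hIcalc ν inferInstance hφintν hψν
  have hLμ : ∫ z, ψ z ∂μ = ∫ t in Ioc 0 (2 * R), (μ {z | t ≤ ψ z}).toReal :=
    hψintμ.integral_eq_integral_Ioc_meas_le (ae_of_all _ hψ0)
      (ae_of_all _ hψ2R)
  have hLν : ∫ z, ψ z ∂ν = ∫ t in Ioc 0 (2 * R), (ν {z | t ≤ ψ z}).toReal :=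
    hψintν.integral_eq_integral_Ioc_meas_le (ae_of_all _ hψ0)
      (ae_of_all _ hψ2R)
  have hGm : ∀ (m : Measure Z), Measurable (fun t : ℝ => (m {z | t ≤ ψ z}).toReal) :=
    fun m => Measurable.ennreal_toReal (Antitone.measurable fun s t hst =>
      measure_mono fun z hz => le_trans hst hz)
  have hGint : ∀ (m : Measure Z), IsProbabilityMeasure m →
      IntegrableOn (fun t : ℝ => (m {z | t ≤ ψ z}).toReal) (Ioc 0 (2 * R)) volume := by
    intro m _
    refine Integrable.mono' (g := fun _ => (1 : ℝ))
      (integrableOn_const measure_Ioc_lt_top.ne)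
      (hGm m).aestronglyMeasurable ?_
    refine ae_of_all _ fun t => ?_
    rw [Real.norm_eq_abs, abs_of_nonneg ENNReal.toReal_nonneg]
    exact toReal_prob_le_one _
  have hGintμ := hGint μ inferInstance
  have hGintν := hGint ν inferInstance
  have key : ∫ z, φ z ∂μ - ∫ z, φ z ∂ν =
      ∫ t in Ioc 0 (2 * R),
        ((μ {z | t ≤ ψ z}).toReal - (ν {z | t ≤ ψ z}).toReal) := by
    rw [integral_sub hGintμ hGintν, ← hLμ, ← hLν, hIμ, hIν]
    ring
  rw [key]
  have hb : ‖∫ t in Ioc 0 (2 * R),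
      ((μ {z | t ≤ ψ z}).toReal - (ν {z | t ≤ ψ z}).toReal)‖ ≤
      advAll μ ν * (volume (Ioc 0 (2 * R))).toReal := by
    refine norm_setIntegral_le_of_norm_le_const measure_Ioc_lt_top ?_
    · intro t ht
      have hf : Measurable (fun z => if t ≤ ψ z then true else false) :=
        Measurable.ite (measurableSet_le measurable_const hψc.measurable)
          measurable_const measurable_const
      have hset : {z | (if t ≤ ψ z then true else false) = true} = {z | t ≤ ψ z} := by
        ext z; by_cases hz : t ≤ ψ z <;> simp [hz]
      have hle := le_ciSup (advAll_bddAbove μ ν)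
        (⟨fun z => if t ≤ ψ z then true else false, hf⟩ : {f : Z → Bool // Measurable f})
      rw [Real.norm_eq_abs, abs_sub_comm]
      calc |(ν {z | t ≤ ψ z}).toReal - (μ {z | t ≤ ψ z}).toReal|
          = |(ν {z | (if t ≤ ψ z then true else false) = true}).toReal -
              (μ {z | (if t ≤ ψ z then true else false) = true}).toReal| := by rw [hset]
        _ ≤ advAll μ ν := hle
  rw [Real.norm_eq_abs] at hb
  calc |∫ t in Ioc 0 (2 * R), ((μ {z | t ≤ ψ z}).toReal - (ν {z | t ≤ ψ z}).toReal)|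
      ≤ advAll μ ν * (volume (Ioc 0 (2 * R))).toReal := hb
    _ = 2 * R * advAll μ ν := by
        rw [Real.volume_Ioc, ENNReal.toReal_ofReal (by linarith)]
        ring

/-- (Corollary 3.3 of the paper.) In the setting of the accuracy /
obfuscation trade-off theorem, with `α = Pr(A = 0)`, the overall misclassification
error satisfies
`Pr(h(g(X)) ≠ Y) ≥ min{α, 1-α}·(δ - C·W1(g♯D_0, g♯D_1))
                 ≥ min{α, 1-α}·(δ - 2RC·Adv(F_A))`. -/
theorem overall_error_lower_bound {Ω 𝒳 Z : Type*} [MeasurableSpace Ω] [MeasurableSpace 𝒳]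
    [NormedAddCommGroup Z] [MeasurableSpace Z] [BorelSpace Z]
    (P : Measure Ω) [IsProbabilityMeasure P]
    (X : Ω → 𝒳) (A : Ω → Bool) (Y : Ω → Bool)
    (hX : Measurable X) (hA : Measurable A) (hY : Measurable Y)
    (hA0 : 0 < P (A ⁻¹' {false})) (hA1 : P (A ⁻¹' {false}) < 1)
    (g : 𝒳 → Z) (hg : Measurable g) (R : ℝ)
    (hR : ∀ᵐ ω ∂P, ‖g (X ω)‖ ≤ R)
    (C : ℝ≥0) (hC : 0 < C) (h : Z → ℝ) (hh : LipschitzWith C h)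
    (hh01 : ∀ᵐ ω ∂P, h (g (X ω)) = 0 ∨ h (g (X ω)) = 1) :
    (P {ω | h (g (X ω)) ≠ (if Y ω then (1 : ℝ) else 0)}).toReal ≥
      min (P (A ⁻¹' {false})).toReal (1 - (P (A ⁻¹' {false})).toReal) *
        (|((P[|A ⁻¹' {false}]) (Y ⁻¹' {true})).toReal -
            ((P[|A ⁻¹' {true}]) (Y ⁻¹' {true})).toReal| -
          (C : ℝ) * W1 (((P[|A ⁻¹' {false}]).map X).map g) (((P[|A ⁻¹' {true}]).map X).map g))
    ∧
    min (P (A ⁻¹' {false})).toReal (1 - (P (A ⁻¹' {false})).toReal) *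
        (|((P[|A ⁻¹' {false}]) (Y ⁻¹' {true})).toReal -
            ((P[|A ⁻¹' {true}]) (Y ⁻¹' {true})).toReal| -
          (C : ℝ) * W1 (((P[|A ⁻¹' {false}]).map X).map g) (((P[|A ⁻¹' {true}]).map X).map g)) ≥
      min (P (A ⁻¹' {false})).toReal (1 - (P (A ⁻¹' {false})).toReal) *
        (|((P[|A ⁻¹' {false}]) (Y ⁻¹' {true})).toReal -
            ((P[|A ⁻¹' {true}]) (Y ⁻¹' {true})).toReal| -
          2 * R * (C : ℝ) *
            advAll (((P[|A ⁻¹' {false}]).map X).map g) (((P[|A ⁻¹' {true}]).map X).map g)) := by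
  classical
  have hSm : MeasurableSet (A ⁻¹' {false}) := hA (measurableSet_singleton false)
  set S : Set Ω := A ⁻¹' {false} with hSdef
  have hScm : MeasurableSet Sᶜ := hSm.compl
  have hTrue : A ⁻¹' {true} = Sᶜ := by
    ext ω; cases hb : A ω <;> simp [hSdef, hb]
  rw [hTrue]
  have hαfin : P S ≠ ⊤ := measure_ne_top P S
  have hα0 : P S ≠ 0 := hA0.ne'
  have hSc0 : P Sᶜ ≠ 0 := by
    rw [prob_compl_eq_one_sub hSm]
    intro hcontra
    rw [tsub_eq_zero_iff_le] at hcontra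
    exact absurd hcontra (not_le.2 hA1)
  haveI hP0 : IsProbabilityMeasure (P[|S]) := cond_isProbabilityMeasure hα0
  haveI hP1 : IsProbabilityMeasure (P[|Sᶜ]) := cond_isProbabilityMeasure hSc0
  set P0 : Measure Ω := P[|S] with hP0def
  set P1 : Measure Ω := P[|Sᶜ] with hP1def
  have hgX : Measurable (fun ω => g (X ω)) := hg.comp hX
  set ν0 : Measure Z := (P0.map X).map g with hν0def
  set ν1 : Measure Z := (P1.map X).map g with hν1def
  have hmap0 : ν0 = P0.map (fun ω => g (X ω)) := by
    rw [hν0def, Measure.map_map hg hX]; rfl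
  have hmap1 : ν1 = P1.map (fun ω => g (X ω)) := by
    rw [hν1def, Measure.map_map hg hX]; rfl
  haveI : IsProbabilityMeasure ν0 := by
    rw [hmap0]; exact Measure.isProbabilityMeasure_map hgX.aemeasurable
  haveI : IsProbabilityMeasure ν1 := by
    rw [hmap1]; exact Measure.isProbabilityMeasure_map hgX.aemeasurable
  have hac0 : P0 ≪ P := cond_absolutelyContinuous
  have hac1 : P1 ≪ P := cond_absolutelyContinuous
  have hae0 : ∀ᵐ ω ∂P0, ‖g (X ω)‖ ≤ R := hac0.ae_le hR
  have hae1 : ∀ᵐ ω ∂P1, ‖g (X ω)‖ ≤ R := hac1.ae_le hR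
  have hnormset : MeasurableSet {z : Z | ‖z‖ ≤ R} :=
    (isClosed_le continuous_norm continuous_const).measurableSet
  have hν0R : ∀ᵐ z ∂ν0, ‖z‖ ≤ R := by
    rw [hmap0, ae_map_iff hgX.aemeasurable hnormset]; exact hae0
  have hν1R : ∀ᵐ z ∂ν1, ‖z‖ ≤ R := by
    rw [hmap1, ae_map_iff hgX.aemeasurable hnormset]; exact hae1
  haveI : Filter.NeBot (ae P) := ae_neBot.2 (IsProbabilityMeasure.ne_zero P)
  have hR0 : 0 ≤ R := by
    obtain ⟨ω, hω⟩ := hR.exists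
    exact le_trans (norm_nonneg _) hω
  -- events
  set Err : Set Ω := {ω | h (g (X ω)) ≠ (if Y ω then (1 : ℝ) else 0)} with hErrdef
  have hhm : Measurable fun ω => h (g (X ω)) := hh.continuous.measurable.comp hgX
  have hErrm : MeasurableSet Err := by
    have h2 : Measurable fun ω => (if Y ω then (1 : ℝ) else 0) :=
      Measurable.ite (hY (measurableSet_singleton true)) measurable_const measurable_const
    have : Err = {ω | h (g (X ω)) = (if Y ω then (1 : ℝ) else 0)}ᶜ := by
      ext ω; simp [hErrdef]
    rw [this]
    exact (measurableSet_eq_fun hhm h2).compl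
  set Yt : Set Ω := Y ⁻¹' {true} with hYtdef
  set Hs : Set Ω := {ω | h (g (X ω)) = 1} with hHdef
  have hHm : MeasurableSet Hs := hhm (measurableSet_singleton 1)
  -- law of total probability
  have hpart : ∀ (s : Set Ω), MeasurableSet s → P s ≠ 0 → P s * (P[|s]) Err = P (s ∩ Err) := by
    intro s hs hs0
    rw [cond_apply hs, ← mul_assoc, ENNReal.mul_inv_cancel hs0 (measure_ne_top P s), one_mul]
  have htotal : (P Err).toReal =
      (P S).toReal * (P0 Err).toReal + (P Sᶜ).toReal * (P1 Err).toReal := by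
    have h2 : P Err = P (S ∩ Err) + P (Sᶜ ∩ Err) := by
      rw [Set.inter_comm S, ← Set.diff_eq_compl_inter]
      exact (measure_inter_add_diff Err hSm).symm
    rw [h2, ← hpart S hSm hα0, ← hpart Sᶜ hScm hSc0,
      ENNReal.toReal_add (by finiteness) (by finiteness),
      ENNReal.toReal_mul, ENNReal.toReal_mul]
  have hacompl : (P Sᶜ).toReal = 1 - (P S).toReal := by
    rw [prob_compl_eq_one_sub hSm, ENNReal.toReal_sub_of_le prob_le_one ENNReal.one_ne_top]
    simp
  -- per-group error bound
  have herr : ∀ (m : Measure Ω), IsProbabilityMeasure m →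
      |(m Hs).toReal - (m Yt).toReal| ≤ (m Err).toReal := by
    intro m hm
    have hsub1 : Hs \ Yt ⊆ Err := by
      rintro ω ⟨h1, h2⟩
      simp only [hHdef, Set.mem_setOf_eq] at h1
      simp only [hYtdef, Set.mem_preimage, Set.mem_singleton_iff] at h2
      simp only [hErrdef, Set.mem_setOf_eq]
      have : Y ω = false := by cases hb : Y ω; rfl; exact absurd hb h2
      rw [h1, this]
      norm_num
    have hsub2 : Yt \ Hs ⊆ Err := by
      rintro ω ⟨h1, h2⟩
      simp only [hYtdef, Set.mem_preimage, Set.mem_singleton_iff] at h1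
      simp only [hHdef, Set.mem_setOf_eq] at h2
      simp only [hErrdef, Set.mem_setOf_eq]
      rw [h1]
      simpa using h2
    have e1 : m Hs ≤ m Yt + m Err :=
      le_trans (measure_le_inter_add_diff m Hs Yt)
        (add_le_add (measure_mono Set.inter_subset_right) (measure_mono hsub1))
    have e2 : m Yt ≤ m Hs + m Err :=
      le_trans (measure_le_inter_add_diff m Yt Hs)
        (add_le_add (measure_mono Set.inter_subset_right) (measure_mono hsub2))
    have f1 : (m Hs).toReal ≤ (m Yt).toReal + (m Err).toReal := by
      have := ENNReal.toReal_mono (by finiteness) e1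
      rwa [ENNReal.toReal_add (by finiteness) (by finiteness)] at this
    have f2 : (m Yt).toReal ≤ (m Hs).toReal + (m Err).toReal := by
      have := ENNReal.toReal_mono (by finiteness) e2
      rwa [ENNReal.toReal_add (by finiteness) (by finiteness)] at this
    rw [abs_sub_le_iff]
    constructor <;> linarith
  -- integral of h equals measure of Hs
  have hintcalc : ∀ (m : Measure Ω), IsProbabilityMeasure m → m ≪ P →
      ∫ ω, h (g (X ω)) ∂m = (m Hs).toReal := by
    intro m hm hac
    have h01 : ∀ᵐ ω ∂m, h (g (X ω)) = 0 ∨ h (g (X ω)) = 1 := hac.ae_le hh01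
    have heq : (fun ω => h (g (X ω))) =ᵐ[m] Hs.indicator (1 : Ω → ℝ) := by
      filter_upwards [h01] with ω hω
      rcases hω with h0 | h1
      · rw [Set.indicator_of_notMem (by simp [hHdef, h0])]
        exact h0
      · rw [Set.indicator_of_mem (by simp [hHdef, h1])]
        simpa using h1
    rw [integral_congr_ae heq, integral_indicator_one hHm]; rfl
  have hint0 : ∫ z, h z ∂ν0 = (P0 Hs).toReal := by
    rw [hmap0, integral_map hgX.aemeasurable hh.continuous.aestronglyMeasurable]
    exact hintcalc P0 hP0 hac0
  have hint1 : ∫ z, h z ∂ν1 = (P1 Hs).toReal := by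
    rw [hmap1, integral_map hgX.aemeasurable hh.continuous.aestronglyMeasurable]
    exact hintcalc P1 hP1 hac1
  -- W1 facts
  have hW1bdd : BddAbove (Set.range fun φ : {φ : Z → ℝ // LipschitzWith 1 φ} =>
      |∫ z, φ.1 z ∂ν0 - ∫ z, φ.1 z ∂ν1|) := by
    refine ⟨2 * R * advAll ν0 ν1, ?_⟩
    rintro x ⟨φ, rfl⟩
    exact abs_integral_sub_le_adv ν0 ν1 hR0 hν0R hν1R φ.2
  have hW1le : W1 ν0 ν1 ≤ 2 * R * advAll ν0 ν1 := by
    haveI : Nonempty {φ : Z → ℝ // LipschitzWith 1 φ} :=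
      ⟨⟨fun _ => 0, LipschitzWith.const' 0⟩⟩
    refine ciSup_le fun φ => ?_
    exact abs_integral_sub_le_adv ν0 ν1 hR0 hν0R hν1R φ.2
  have hCpos : (0 : ℝ) < (C : ℝ) := hC
  have hW : |(P0 Hs).toReal - (P1 Hs).toReal| ≤ (C : ℝ) * W1 ν0 ν1 := by
    set φ : Z → ℝ := fun z => (C : ℝ)⁻¹ * h z with hφdef
    have hφlip : LipschitzWith 1 φ := by
      apply LipschitzWith.of_dist_le_mul
      intro x y
      rw [hφdef]
      simp only
      rw [Real.dist_eq, ← mul_sub, abs_mul, abs_of_nonneg (by positivity)]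
      have hd := hh.dist_le_mul x y
      rw [Real.dist_eq] at hd
      have : (C : ℝ)⁻¹ * |h x - h y| ≤ (C : ℝ)⁻¹ * ((C : ℝ) * dist x y) :=
        mul_le_mul_of_nonneg_left hd (by positivity)
      rw [NNReal.coe_one, one_mul]
      calc (C : ℝ)⁻¹ * |h x - h y| ≤ (C : ℝ)⁻¹ * ((C : ℝ) * dist x y) := this
        _ = dist x y := by field_simp
    have hle := le_ciSup hW1bdd (⟨φ, hφlip⟩ : {φ : Z → ℝ // LipschitzWith 1 φ})
    have hcalc : ∫ z, φ z ∂ν0 - ∫ z, φ z ∂ν1 =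
        (C : ℝ)⁻¹ * ((P0 Hs).toReal - (P1 Hs).toReal) := by
      rw [hφdef]
      simp only
      rw [integral_const_mul, integral_const_mul, hint0, hint1]
      ring
    have habs2 : |(P0 Hs).toReal - (P1 Hs).toReal| =
        (C : ℝ) * |∫ z, φ z ∂ν0 - ∫ z, φ z ∂ν1| := by
      rw [hcalc, abs_mul, abs_of_nonneg (by positivity : (0:ℝ) ≤ (C : ℝ)⁻¹)]
      field_simp
    rw [habs2]
    exact mul_le_mul_of_nonneg_left hle hCpos.le
  -- delta chain
  set δ : ℝ := |(P0 Yt).toReal - (P1 Yt).toReal| with hδdef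
  have hδle : δ ≤ (P0 Err).toReal + (P1 Err).toReal + (C : ℝ) * W1 ν0 ν1 := by
    have t1 := herr P0 hP0
    have t2 := herr P1 hP1
    have h4 : δ ≤ |(P0 Yt).toReal - (P0 Hs).toReal| +
        |(P0 Hs).toReal - (P1 Hs).toReal| + |(P1 Hs).toReal - (P1 Yt).toReal| := by
      calc δ ≤ |(P0 Yt).toReal - (P1 Hs).toReal| +
          |(P1 Hs).toReal - (P1 Yt).toReal| := abs_sub_le _ _ _
        _ ≤ (|(P0 Yt).toReal - (P0 Hs).toReal| + |(P0 Hs).toReal - (P1 Hs).toReal|) +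
            |(P1 Hs).toReal - (P1 Yt).toReal| :=
          add_le_add_left (abs_sub_le _ _ _) _
        _ = _ := by ring
    rw [abs_sub_comm] at t1
    rw [abs_sub_comm (P1 Hs).toReal] at t2
    have t2' : |(P1 Hs).toReal - (P1 Yt).toReal| ≤ (P1 Err).toReal := by
      rw [abs_sub_comm]; exact t2
    linarith
  -- final assembly
  set a : ℝ := (P S).toReal with hadef
  set mn : ℝ := min a (1 - a) with hmndef
  have ha0 : 0 ≤ a := ENNReal.toReal_nonneg
  have ha1' : a ≤ 1 := toReal_prob_le_one S
  have hmn0 : 0 ≤ mn := le_min ha0 (by linarith)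
  have he0 : (0:ℝ) ≤ (P0 Err).toReal := ENNReal.toReal_nonneg
  have he1 : (0:ℝ) ≤ (P1 Err).toReal := ENNReal.toReal_nonneg
  have part1 : (P Err).toReal ≥ mn * (δ - (C : ℝ) * W1 ν0 ν1) := by
    have hsum : mn * (δ - (C : ℝ) * W1 ν0 ν1) ≤ mn * ((P0 Err).toReal + (P1 Err).toReal) :=
      mul_le_mul_of_nonneg_left (by linarith) hmn0
    have hmix : mn * ((P0 Err).toReal + (P1 Err).toReal) ≤
        a * (P0 Err).toReal + (1 - a) * (P1 Err).toReal := by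
      have l1 : mn * (P0 Err).toReal ≤ a * (P0 Err).toReal :=
        mul_le_mul_of_nonneg_right (min_le_left _ _) he0
      have l2 : mn * (P1 Err).toReal ≤ (1 - a) * (P1 Err).toReal :=
        mul_le_mul_of_nonneg_right (min_le_right _ _) he1
      linarith [mul_add mn (P0 Err).toReal (P1 Err).toReal]
    rw [htotal, hacompl]
    linarith
  have part2 : mn * (δ - (C : ℝ) * W1 ν0 ν1) ≥
      mn * (δ - 2 * R * (C : ℝ) * advAll ν0 ν1) := by
    have hCW : (C : ℝ) * W1 ν0 ν1 ≤ 2 * R * (C : ℝ) * advAll ν0 ν1 := by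
      have := mul_le_mul_of_nonneg_left hW1le hCpos.le
      nlinarith
    exact mul_le_mul_of_nonneg_left (by linarith) hmn0
  exact ⟨part1, part2⟩
end

section
/- Let A be a random variable taking values in {0,1} and let Z be a random variable taking values in a countable set S, defined on the same probability space. Let H := H(A | Z) denote the base-2 conditional Shannon entropy of A given Z, and assume H > 0. Then for every function f : S → {0,1}, Pr( f(Z) ≠ A ) ≥ H / ( 2 · log₂(6 / H) ). -/
open MeasureTheory ProbabilityTheory

/-- The base-2 conditional Shannon entropy `H(A | Z)` of a binary random variable `A`
given a discrete random variable `Z`: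
`H(A | Z) = Σ_s Pr(Z = s) · Σ_b (- Pr(A = b | Z = s) · log₂ Pr(A = b | Z = s))`.
(The convention `0 · log₂ 0 = 0` is automatic since `Real.logb 2 0 = 0`.) -/
noncomputable def condEnt {Ω S : Type*} [MeasurableSpace Ω] (P : Measure Ω)
    (A : Ω → Bool) (Z : Ω → S) : ℝ :=
  ∑' s : S, (P (Z ⁻¹' {s})).toReal *
    ∑' b : Bool, -(((P[|Z ⁻¹' {s}]) (A ⁻¹' {b})).toReal *
      Real.logb 2 (((P[|Z ⁻¹' {s}]) (A ⁻¹' {b})).toReal))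

/-- Key elementary inequality: `x (1 - log x) ≤ 1` for `x ≥ 0`. -/
lemma key_ineq (x : ℝ) (hx : 0 ≤ x) : x - x * Real.log x ≤ 1 := by
  rcases eq_or_lt_of_le hx with h | h
  · simp [← h]
  · have h1 := Real.log_le_sub_one_of_pos (inv_pos.mpr h)
    rw [Real.log_inv] at h1
    have h2 := mul_le_mul_of_nonneg_left h1 h.le
    rw [mul_sub, mul_inv_cancel₀ h.ne'] at h2
    nlinarith

/-- Tangent-line style bound for binary entropy (natural log version). -/
lemma ent_bound (m c : ℝ) (hm0 : 0 ≤ m) (hm1 : m ≤ 1) (hc : 0 < c) :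
    -(m * Real.log m) - (1 - m) * Real.log (1 - m) ≤ c - m * Real.log c := by
  have h2 : -((1 - m) * Real.log (1 - m)) ≤ m := by
    have := key_ineq (1 - m) (by linarith)
    linarith
  have h1 : -(m * Real.log m) ≤ c - m - m * Real.log c := by
    rcases eq_or_lt_of_le hm0 with h | h
    · simp [← h]
      linarith
    · have hk := key_ineq (m / c) (by positivity)
      rw [Real.log_div h.ne' hc.ne'] at hk
      have := mul_le_mul_of_nonneg_left hk hc.le
      have hcm : c * (m / c) = m := by field_simp
      nlinarith
  linarith

/-- Pointwise real inequality used for each value `s` of `Z`. -/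
lemma pointwise_real (c p vG vB : ℝ) (hc : 0 < c) (hp : 0 < p) (hvG : 0 ≤ vG)
    (hvB : 0 ≤ vB) (hsum : vG + vB = p) :
    p * (-(vB / p * Real.logb 2 (vB / p)) + -(vG / p * Real.logb 2 (vG / p))) ≤
      (c * p - Real.log c * vB) / Real.log 2 := by
  have L2 : (0:ℝ) < Real.log 2 := Real.log_pos one_lt_two
  set m := vB / p with hm
  have hm0 : 0 ≤ m := by positivity
  have hm1 : m ≤ 1 := by rw [hm, div_le_one hp]; linarith
  have h1 : vG / p = 1 - m := by rw [hm]; field_simp; linarith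
  have hEB := ent_bound m c hm0 hm1 hc
  have h2 : p * (-(m * Real.log m) - (1 - m) * Real.log (1 - m)) ≤
      p * (c - m * Real.log c) := mul_le_mul_of_nonneg_left hEB hp.le
  have hvB' : vB = p * m := by rw [hm]; field_simp
  calc p * (-(vB / p * Real.logb 2 (vB / p)) + -(vG / p * Real.logb 2 (vG / p)))
      = (p * (-(m * Real.log m) - (1 - m) * Real.log (1 - m))) / Real.log 2 := by
        rw [h1]; simp only [Real.logb, ← hm]; ring
    _ ≤ (p * (c - m * Real.log c)) / Real.log 2 := by
        apply div_le_div_of_nonneg_right h2 L2.le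
    _ = (c * p - Real.log c * vB) / Real.log 2 := by rw [hvB']; ring_nf

set_option maxHeartbeats 1000000 in
/-- (Fano-type bound; first part of Theorem 3.4 of the paper.)
If `A` is a binary random variable, `Z` takes values in a countable set `S`, and
`H := H(A | Z) > 0`, then every adversary `f : S → {0,1}` satisfies
`Pr(f(Z) ≠ A) ≥ H / (2 · log₂(6 / H))`. -/
theorem inference_error_lower_bound {Ω S : Type*} [MeasurableSpace Ω]
    [MeasurableSpace S] [MeasurableSingletonClass S] [Countable S]
    (P : Measure Ω) [IsProbabilityMeasure P]
    (A : Ω → Bool) (Z : Ω → S) (hA : Measurable A) (hZ : Measurable Z)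
    (hH : 0 < condEnt P A Z) (f : S → Bool) :
    (P {ω | f (Z ω) ≠ A ω}).toReal ≥
      condEnt P A Z / (2 * Real.logb 2 (6 / condEnt P A Z)) := by
  classical
  set E : Set Ω := {ω | f (Z ω) ≠ A ω} with hEdef
  set c : ℝ := (P E).toReal with hcdef
  have L2pos : (0:ℝ) < Real.log 2 := Real.log_pos one_lt_two
  have htm : ∀ s : S, MeasurableSet (Z ⁻¹' {s}) := fun s => hZ (measurableSet_singleton s)
  have hAm : ∀ b : Bool, MeasurableSet (A ⁻¹' {b}) := fun b => hA (measurableSet_singleton b)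
  have hEm : MeasurableSet E := by
    have hE2 : E = A ⁻¹' {true} ∩ (f ∘ Z) ⁻¹' {false} ∪ A ⁻¹' {false} ∩ (f ∘ Z) ⁻¹' {true} := by
      ext ω
      cases hb : A ω <;> cases hfz : f (Z ω) <;>
        simp [hEdef, Set.mem_setOf_eq, hb, hfz, Function.comp]
    rw [hE2]
    have hfZ : Measurable (f ∘ Z) := (measurable_of_countable f).comp hZ
    exact ((hAm true).inter (hfZ (measurableSet_singleton false))).union
      ((hAm false).inter (hfZ (measurableSet_singleton true)))
  -- E ∩ Z⁻¹{s} = Z⁻¹{s} ∩ A⁻¹{!(f s)}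
  have hEts : ∀ s : S, E ∩ Z ⁻¹' {s} = Z ⁻¹' {s} ∩ A ⁻¹' {(!(f s))} := by
    intro s
    ext ω
    by_cases hz : Z ω = s <;> cases hb : A ω <;> cases hf : f s <;>
      simp [hEdef, Set.mem_setOf_eq, hz, hb, hf]
  -- partition of Z⁻¹{s} by values of A
  have hpart : ∀ s : S, P (Z ⁻¹' {s}) =
      P (Z ⁻¹' {s} ∩ A ⁻¹' {false}) + P (Z ⁻¹' {s} ∩ A ⁻¹' {true}) := by
    intro s
    have hU : Z ⁻¹' {s} = (Z ⁻¹' {s} ∩ A ⁻¹' {false}) ∪ (Z ⁻¹' {s} ∩ A ⁻¹' {true}) := by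
      ext ω; cases hb : A ω <;> simp [hb]
    have hdisj : Disjoint (Z ⁻¹' {s} ∩ A ⁻¹' {false}) (Z ⁻¹' {s} ∩ A ⁻¹' {true}) := by
      apply Set.disjoint_left.mpr
      rintro ω ⟨-, h1⟩ ⟨-, h2⟩
      simp_all
    calc P (Z ⁻¹' {s})
        = P ((Z ⁻¹' {s} ∩ A ⁻¹' {false}) ∪ (Z ⁻¹' {s} ∩ A ⁻¹' {true})) := by rw [← hU]
      _ = _ := measure_union hdisj ((htm s).inter (hAm true))
  have hq : ∀ (s : S) (b : Bool), (P[|Z ⁻¹' {s}]) (A ⁻¹' {b}) =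
      (P (Z ⁻¹' {s}))⁻¹ * P (Z ⁻¹' {s} ∩ A ⁻¹' {b}) := fun s b =>
    cond_apply (htm s) P (A ⁻¹' {b})
  -- total-probability sums
  have hdisjZ : Pairwise (Function.onFun Disjoint fun s : S => Z ⁻¹' {s}) := by
    intro i j hij
    exact Disjoint.preimage Z (by simp [hij])
  have hsum_univ : ∑' s : S, P (Z ⁻¹' {s}) = 1 := by
    rw [← measure_iUnion hdisjZ htm]
    have : ⋃ s : S, Z ⁻¹' {s} = Set.univ := by ext ω; simp
    rw [this, measure_univ]
  have hsum_E : ∑' s : S, P (E ∩ Z ⁻¹' {s}) = P E := by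
    have hd : Pairwise (Function.onFun Disjoint fun s : S => E ∩ Z ⁻¹' {s}) := by
      intro i j hij
      exact (hdisjZ hij).mono Set.inter_subset_right Set.inter_subset_right
    rw [← measure_iUnion hd (fun s => hEm.inter (htm s))]
    congr 1
    rw [← Set.inter_iUnion]
    have : ⋃ s : S, Z ⁻¹' {s} = Set.univ := by ext ω; simp
    rw [this, Set.inter_univ]
  have hp_sum : ∑' s : S, (P (Z ⁻¹' {s})).toReal = 1 := by
    rw [← ENNReal.tsum_toReal_eq (fun s => measure_ne_top P _), hsum_univ, ENNReal.toReal_one]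
  have he_sum : ∑' s : S, (P (E ∩ Z ⁻¹' {s})).toReal = c := by
    rw [← ENNReal.tsum_toReal_eq (fun s => measure_ne_top P _), hsum_E]
  have hp_summable : Summable fun s : S => (P (Z ⁻¹' {s})).toReal :=
    ENNReal.summable_toReal (by rw [hsum_univ]; exact ENNReal.one_ne_top)
  have he_summable : Summable fun s : S => (P (E ∩ Z ⁻¹' {s})).toReal :=
    ENNReal.summable_toReal (by rw [hsum_E]; exact measure_ne_top P E)
  -- positivity of c
  have hcpos : 0 < c := by
    rcases lt_or_eq_of_le (ENNReal.toReal_nonneg : 0 ≤ c) with h | h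
    · exact h
    · exfalso
      have hPE : P E = 0 := by
        rcases (ENNReal.toReal_eq_zero_iff _).mp h.symm with h' | h'
        · exact h'
        · exact absurd h' (measure_ne_top P E)
      have hzero : condEnt P A Z = 0 := by
        have : ∀ s : S, (P (Z ⁻¹' {s})).toReal *
            ∑' b : Bool, -(((P[|Z ⁻¹' {s}]) (A ⁻¹' {b})).toReal *
              Real.logb 2 (((P[|Z ⁻¹' {s}]) (A ⁻¹' {b})).toReal)) = 0 := by
          intro s
          by_cases h0 : P (Z ⁻¹' {s}) = 0
          · simp [h0]
          · have hbad : P (Z ⁻¹' {s} ∩ A ⁻¹' {(!(f s))}) = 0 := by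
              rw [← hEts s]
              exact measure_mono_null Set.inter_subset_left hPE
            have hgood : P (Z ⁻¹' {s} ∩ A ⁻¹' {f s}) = P (Z ⁻¹' {s}) := by
              cases hf : f s
              · rw [hf] at hbad
                simp only [Bool.not_false] at hbad
                rw [hpart s, hbad, add_zero]
              · rw [hf] at hbad
                simp only [Bool.not_true] at hbad
                rw [hpart s, hbad, zero_add]
            have hq1 : ((P[|Z ⁻¹' {s}]) (A ⁻¹' {f s})).toReal = 1 := by
              rw [hq s (f s), hgood, ENNReal.inv_mul_cancel h0 (measure_ne_top P _)]
              simp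
            have hq0 : ((P[|Z ⁻¹' {s}]) (A ⁻¹' {(!(f s))})).toReal = 0 := by
              rw [hq s (!(f s)), hbad]
              simp
            rw [tsum_bool]
            cases hf : f s
            · rw [hf] at hq1 hq0
              simp only [Bool.not_false] at hq0
              rw [hq1, hq0]
              simp
            · rw [hf] at hq1 hq0
              simp only [Bool.not_true] at hq0
              rw [hq1, hq0]
              simp
        rw [condEnt, tsum_congr this, tsum_zero]
      rw [hzero] at hH
      exact lt_irrefl 0 hH
  -- pointwise bound
  have hpoint : ∀ s : S, (P (Z ⁻¹' {s})).toReal *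
      (∑' b : Bool, -(((P[|Z ⁻¹' {s}]) (A ⁻¹' {b})).toReal *
        Real.logb 2 (((P[|Z ⁻¹' {s}]) (A ⁻¹' {b})).toReal))) ≤
      (c * (P (Z ⁻¹' {s})).toReal - Real.log c * (P (E ∩ Z ⁻¹' {s})).toReal) / Real.log 2 := by
    intro s
    by_cases h0 : P (Z ⁻¹' {s}) = 0
    · have hE0 : P (E ∩ Z ⁻¹' {s}) = 0 := measure_mono_null Set.inter_subset_right h0
      simp [h0, hE0]
    · have hpt_pos : 0 < (P (Z ⁻¹' {s})).toReal :=
        ENNReal.toReal_pos h0 (measure_ne_top P _)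
      have hqr : ∀ b : Bool, ((P[|Z ⁻¹' {s}]) (A ⁻¹' {b})).toReal =
          (P (Z ⁻¹' {s} ∩ A ⁻¹' {b})).toReal / (P (Z ⁻¹' {s})).toReal := by
        intro b
        rw [hq s b, ENNReal.toReal_mul, ENNReal.toReal_inv]
        rw [inv_mul_eq_div]
      have hpr : (P (Z ⁻¹' {s} ∩ A ⁻¹' {false})).toReal +
          (P (Z ⁻¹' {s} ∩ A ⁻¹' {true})).toReal = (P (Z ⁻¹' {s})).toReal := by
        rw [← ENNReal.toReal_add (measure_ne_top P _) (measure_ne_top P _), ← hpart s]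
      have heE : (P (E ∩ Z ⁻¹' {s})).toReal =
          (P (Z ⁻¹' {s} ∩ A ⁻¹' {(!(f s))})).toReal := by rw [hEts s]
      rw [tsum_bool, hqr true, hqr false, heE]
      cases hf : f s
      · simp only [Bool.not_false]
        have := pointwise_real c (P (Z ⁻¹' {s})).toReal
          (P (Z ⁻¹' {s} ∩ A ⁻¹' {false})).toReal
          (P (Z ⁻¹' {s} ∩ A ⁻¹' {true})).toReal hcpos hpt_pos
          ENNReal.toReal_nonneg ENNReal.toReal_nonneg (by linarith)
        calc _ = (P (Z ⁻¹' {s})).toReal *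
              (-((P (Z ⁻¹' {s} ∩ A ⁻¹' {true})).toReal / (P (Z ⁻¹' {s})).toReal *
                Real.logb 2 ((P (Z ⁻¹' {s} ∩ A ⁻¹' {true})).toReal / (P (Z ⁻¹' {s})).toReal)) +
              -((P (Z ⁻¹' {s} ∩ A ⁻¹' {false})).toReal / (P (Z ⁻¹' {s})).toReal *
                Real.logb 2 ((P (Z ⁻¹' {s} ∩ A ⁻¹' {false})).toReal / (P (Z ⁻¹' {s})).toReal))) := by
              ring
          _ ≤ _ := this
      · simp only [Bool.not_true]
        exact pointwise_real c (P (Z ⁻¹' {s})).toReal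
          (P (Z ⁻¹' {s} ∩ A ⁻¹' {true})).toReal
          (P (Z ⁻¹' {s} ∩ A ⁻¹' {false})).toReal hcpos hpt_pos
          ENNReal.toReal_nonneg ENNReal.toReal_nonneg (by linarith)
  -- sum it all up
  have hRHS_summable : Summable fun s : S =>
      (c * (P (Z ⁻¹' {s})).toReal - Real.log c * (P (E ∩ Z ⁻¹' {s})).toReal) / Real.log 2 :=
    (((hp_summable.mul_left c).sub (he_summable.mul_left (Real.log c))).div_const _)
  have hLHS_nonneg : ∀ s : S, 0 ≤ (P (Z ⁻¹' {s})).toReal *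
      (∑' b : Bool, -(((P[|Z ⁻¹' {s}]) (A ⁻¹' {b})).toReal *
        Real.logb 2 (((P[|Z ⁻¹' {s}]) (A ⁻¹' {b})).toReal))) := by
    intro s
    apply mul_nonneg ENNReal.toReal_nonneg
    rw [tsum_bool]
    have hterm : ∀ b : Bool, 0 ≤ -(((P[|Z ⁻¹' {s}]) (A ⁻¹' {b})).toReal *
        Real.logb 2 (((P[|Z ⁻¹' {s}]) (A ⁻¹' {b})).toReal)) := by
      intro b
      have hb1 : (P[|Z ⁻¹' {s}]) (A ⁻¹' {b}) ≤ 1 := by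
        rw [hq s b]
        by_cases h0 : P (Z ⁻¹' {s}) = 0
        · have : P (Z ⁻¹' {s} ∩ A ⁻¹' {b}) = 0 :=
            measure_mono_null Set.inter_subset_left h0
          simp [this]
        · calc (P (Z ⁻¹' {s}))⁻¹ * P (Z ⁻¹' {s} ∩ A ⁻¹' {b}) ≤
              (P (Z ⁻¹' {s}))⁻¹ * P (Z ⁻¹' {s}) := by
                gcongr
                exact Set.inter_subset_left
            _ = 1 := ENNReal.inv_mul_cancel h0 (measure_ne_top P _)
      have hble : ((P[|Z ⁻¹' {s}]) (A ⁻¹' {b})).toReal ≤ 1 := by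
        calc ((P[|Z ⁻¹' {s}]) (A ⁻¹' {b})).toReal ≤ (1 : ENNReal).toReal :=
            ENNReal.toReal_mono ENNReal.one_ne_top hb1
          _ = 1 := ENNReal.toReal_one
      have hlb := Real.logb_nonpos (by norm_num : (1:ℝ) < 2) ENNReal.toReal_nonneg hble
      have h0q : (0:ℝ) ≤ ((P[|Z ⁻¹' {s}]) (A ⁻¹' {b})).toReal := ENNReal.toReal_nonneg
      nlinarith [mul_nonneg h0q (neg_nonneg.mpr hlb)]
    linarith [hterm true, hterm false]
  have hLHS_summable : Summable fun s : S => (P (Z ⁻¹' {s})).toReal *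
      (∑' b : Bool, -(((P[|Z ⁻¹' {s}]) (A ⁻¹' {b})).toReal *
        Real.logb 2 (((P[|Z ⁻¹' {s}]) (A ⁻¹' {b})).toReal))) :=
    Summable.of_nonneg_of_le hLHS_nonneg hpoint hRHS_summable
  have hHle : condEnt P A Z ≤ (c * 1 - Real.log c * c) / Real.log 2 := by
    have h1 : condEnt P A Z ≤ ∑' s : S,
        (c * (P (Z ⁻¹' {s})).toReal - Real.log c * (P (E ∩ Z ⁻¹' {s})).toReal) / Real.log 2 := by
      rw [condEnt]
      exact Summable.tsum_le_tsum hpoint hLHS_summable hRHS_summable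
    have h2 : ∑' s : S,
        (c * (P (Z ⁻¹' {s})).toReal - Real.log c * (P (E ∩ Z ⁻¹' {s})).toReal) / Real.log 2 =
        (c * 1 - Real.log c * c) / Real.log 2 := by
      rw [tsum_div_const,
        Summable.tsum_sub (hp_summable.mul_left c) (he_summable.mul_left (Real.log c)),
        Summable.tsum_mul_left c hp_summable,
        Summable.tsum_mul_left (Real.log c) he_summable, hp_sum, he_sum]
    linarith
  -- endgame: pure real analysis
  set H := condEnt P A Z with hHdef
  have hkey_c : H * Real.log 2 ≤ c * (1 - Real.log c) := by
    have := (le_div_iff₀ L2pos).mp hHle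
    nlinarith
  have hkc : c - c * Real.log c ≤ 1 := key_ineq c hcpos.le
  have hlog2gt : (0.6931471803 : ℝ) < Real.log 2 := Real.log_two_gt_d9
  have hH6 : H < 6 := by nlinarith
  have hlogpos : 0 < Real.log (6 / H) := Real.log_pos ((one_lt_div hH).mpr hH6)
  -- sqrt bound
  have hsqc : 0 < Real.sqrt c := Real.sqrt_pos.mpr hcpos
  have hsqe : 0 < Real.sqrt (Real.exp 1) := Real.sqrt_pos.mpr (Real.exp_pos 1)
  have hsq : Real.sqrt c * (1 - Real.log c) ≤ 2 / Real.sqrt (Real.exp 1) := by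
    have hx := key_ineq (Real.sqrt c * Real.sqrt (Real.exp 1)) (by positivity)
    have hlx : Real.log (Real.sqrt c * Real.sqrt (Real.exp 1)) =
        Real.log c / 2 + 1 / 2 := by
      rw [Real.log_mul hsqc.ne' hsqe.ne', Real.log_sqrt hcpos.le,
        Real.log_sqrt (Real.exp_pos 1).le, Real.log_exp]
    rw [hlx] at hx
    rw [le_div_iff₀ hsqe]
    nlinarith
  have hB0 : 0 < c * (1 - Real.log c) := lt_of_lt_of_le (by positivity) hkey_c
  have h1 : c * (1 - Real.log c) = Real.sqrt c * (Real.sqrt c * (1 - Real.log c)) := by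
    rw [← mul_assoc, Real.mul_self_sqrt hcpos.le]
  have h2 : c * (1 - Real.log c) ≤ Real.sqrt c * (2 / Real.sqrt (Real.exp 1)) := by
    rw [h1]
    exact mul_le_mul_of_nonneg_left hsq (Real.sqrt_nonneg c)
  have h3 : (H * Real.log 2) ^ 2 ≤ (Real.sqrt c * (2 / Real.sqrt (Real.exp 1))) ^ 2 :=
    pow_le_pow_left₀ (by positivity) (hkey_c.trans h2) 2
  have h4 : (Real.sqrt c * (2 / Real.sqrt (Real.exp 1))) ^ 2 = c * 4 / Real.exp 1 := by
    rw [mul_pow, Real.sq_sqrt hcpos.le, div_pow, Real.sq_sqrt (Real.exp_pos 1).le]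
    ring
  have h5 : H ^ 2 * Real.log 2 ^ 2 ≤ c * 4 / Real.exp 1 := by nlinarith
  have h6 : H ^ 2 * Real.log 2 ^ 2 * Real.exp 1 ≤ c * 4 :=
    (le_div_iff₀ (Real.exp_pos 1)).mp h5
  have hL29 : (1:ℝ)/9 ≤ Real.log 2 ^ 2 := by nlinarith
  have h7 : H ^ 2 * Real.exp 1 * (1/9) ≤ H ^ 2 * Real.exp 1 * Real.log 2 ^ 2 :=
    mul_le_mul_of_nonneg_left hL29 (by positivity)
  have hce : Real.exp 1 * H ^ 2 ≤ 36 * c := by nlinarith [h6, h7]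
  have h36 : Real.exp 1 / c ≤ 36 / H ^ 2 := by
    rw [div_le_div_iff₀ hcpos (by positivity)]
    linarith [hce]
  have hlog36 : 1 - Real.log c ≤ 2 * Real.log (6 / H) := by
    have hmono := Real.log_le_log (by positivity) h36
    rw [Real.log_div (Real.exp_ne_zero 1) hcpos.ne', Real.log_exp] at hmono
    have h36' : Real.log (36 / H ^ 2) = 2 * Real.log 6 - 2 * Real.log H := by
      rw [Real.log_div (by norm_num) (by positivity), Real.log_pow]
      have : Real.log 36 = 2 * Real.log 6 := by
        rw [show (36:ℝ) = 6 ^ 2 by norm_num, Real.log_pow]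
        push_cast; ring
      rw [this]
      push_cast; ring
    have h6H : Real.log (6 / H) = Real.log 6 - Real.log H :=
      Real.log_div (by norm_num) hH.ne'
    rw [h36'] at hmono
    linarith [hmono, h6H]
  -- conclude
  have hDpos : 0 < 2 * Real.logb 2 (6 / H) := by
    have : 0 < Real.logb 2 (6 / H) :=
      Real.logb_pos (by norm_num) ((one_lt_div hH).mpr hH6)
    linarith
  rw [ge_iff_le, div_le_iff₀ hDpos]
  have hfin : c * (1 - Real.log c) ≤ c * (2 * Real.log (6 / H)) :=
    mul_le_mul_of_nonneg_left hlog36 hcpos.le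
  have : H * Real.log 2 ≤ c * (2 * Real.log (6 / H)) := hkey_c.trans hfin
  rw [Real.logb]
  rw [show c * (2 * (Real.log (6 / H) / Real.log 2)) =
    (c * (2 * Real.log (6 / H))) / Real.log 2 by ring]
  rw [le_div_iff₀ L2pos]
  linarith
end

section
/- Let A be a random variable taking values in {0,1} and let Z be a random variable taking values in a metric space Ω, defined on the same probability space, with 0 < Pr(A = 0) < 1. Set α := Pr(A = 0) and let W1* := W1(law of Z given A = 0, law of Z given A = 1). Then for every C-Lipschitz function f : Ω → ℝ taking values in {0,1}, Pr( f(Z) ≠ A ) ≥ min{α, 1−α} · ( 1 − C · W1* ). -/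
open MeasureTheory ProbabilityTheory
open scoped NNReal

lemma lip_integrable_s7 {Ω' : Type*} [MetricSpace Ω'] [MeasurableSpace Ω'] [BorelSpace Ω']
    (μ : Measure Ω') [IsProbabilityMeasure μ] (z₀ : Ω')
    (hd : Integrable (fun z => dist z z₀) μ) {K : ℝ≥0} {φ : Ω' → ℝ}
    (hφ : LipschitzWith K φ) : Integrable φ μ := by
  have hint : Integrable (fun z => (K : ℝ) * dist z z₀ + ‖φ z₀‖) μ :=
    (hd.const_mul _).add (integrable_const _)
  refine hint.mono hφ.continuous.aestronglyMeasurable (ae_of_all _ fun z => ?_)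
  have h1 : ‖φ z‖ ≤ ‖φ z - φ z₀‖ + ‖φ z₀‖ := by
    simpa using norm_add_le (φ z - φ z₀) (φ z₀)
  have h2 : ‖φ z - φ z₀‖ ≤ (K : ℝ) * dist z z₀ := by
    have := hφ.dist_le_mul z z₀
    simpa [Real.dist_eq] using this
  have h3 : (0:ℝ) ≤ (K : ℝ) * dist z z₀ + ‖φ z₀‖ := by positivity
  rw [Real.norm_of_nonneg h3]
  linarith

lemma lip_diff_bound {Ω' : Type*} [MetricSpace Ω'] [MeasurableSpace Ω'] [BorelSpace Ω']
    (μ ν : Measure Ω') [IsProbabilityMeasure μ] [IsProbabilityMeasure ν] (z₀ : Ω')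
    (hdμ : Integrable (fun z => dist z z₀) μ) (hdν : Integrable (fun z => dist z z₀) ν)
    {φ : Ω' → ℝ} (hφ : LipschitzWith 1 φ) :
    |∫ z, φ z ∂μ - ∫ z, φ z ∂ν| ≤ (∫ z, dist z z₀ ∂μ) + ∫ z, dist z z₀ ∂ν := by
  have hiμ : Integrable φ μ := lip_integrable_s7 μ z₀ hdμ hφ
  have hiν : Integrable φ ν := lip_integrable_s7 ν z₀ hdν hφ
  have key : ∀ (ρ : Measure Ω') [IsProbabilityMeasure ρ], Integrable φ ρ →
      Integrable (fun z => dist z z₀) ρ →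
      |∫ z, φ z ∂ρ - φ z₀| ≤ ∫ z, dist z z₀ ∂ρ := by
    intro ρ _ hiρ hdρ
    have : ∫ z, φ z ∂ρ - φ z₀ = ∫ z, (φ z - φ z₀) ∂ρ := by
      rw [integral_sub hiρ (integrable_const _), integral_const]
      simp
    rw [this]
    calc |∫ z, (φ z - φ z₀) ∂ρ| ≤ ∫ z, |φ z - φ z₀| ∂ρ := by
          simpa using norm_integral_le_integral_norm (fun z => φ z - φ z₀) (μ := ρ)
      _ ≤ ∫ z, dist z z₀ ∂ρ := by
          refine integral_mono (hiρ.sub (integrable_const _)).abs hdρ fun z => ?_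
          have := hφ.dist_le_mul z z₀
          simpa [Real.dist_eq] using this
  calc |∫ z, φ z ∂μ - ∫ z, φ z ∂ν|
      ≤ |∫ z, φ z ∂μ - φ z₀| + |∫ z, φ z ∂ν - φ z₀| := by
        have h := abs_sub_le (∫ z, φ z ∂μ) (φ z₀) (∫ z, φ z ∂ν)
        have h2 : |φ z₀ - ∫ z, φ z ∂ν| = |∫ z, φ z ∂ν - φ z₀| := abs_sub_comm _ _
        linarith
    _ ≤ (∫ z, dist z z₀ ∂μ) + ∫ z, dist z z₀ ∂ν :=
        add_le_add (key μ hiμ hdμ) (key ν hiν hdν)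
/-- (Second part of Theorem 3.4 of the paper.) Let `A` be binary
with `α = Pr(A = 0) ∈ (0, 1)`, let `Z` take values in a metric space (with a finite
first moment so that the Wasserstein integrals exist), and let
`W1* = W1(law(Z | A = 0), law(Z | A = 1))`. Then every `C`-Lipschitz adversary
`f` taking values in `{0, 1}` satisfies
`Pr(f(Z) ≠ A) ≥ min{α, 1-α} · (1 - C · W1*)`. -/
theorem lipschitz_adversary_error_lower_bound {Ω Ω' : Type*} [MeasurableSpace Ω]
    [MetricSpace Ω'] [MeasurableSpace Ω'] [BorelSpace Ω']
    (P : Measure Ω) [IsProbabilityMeasure P]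
    (A : Ω → Bool) (Z : Ω → Ω') (hA : Measurable A) (hZ : Measurable Z)
    (hA0 : 0 < P (A ⁻¹' {false})) (hA1 : P (A ⁻¹' {false}) < 1)
    (hmom : ∃ z₀ : Ω', Integrable (fun ω => dist (Z ω) z₀) P)
    (C : ℝ≥0) (f : Ω' → ℝ) (hf : LipschitzWith C f)
    (hf01 : ∀ x, f x = 0 ∨ f x = 1) :
    (P {ω | f (Z ω) ≠ (if A ω then (1 : ℝ) else 0)}).toReal ≥
      min (P (A ⁻¹' {false})).toReal (1 - (P (A ⁻¹' {false})).toReal) *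
        (1 - (C : ℝ) * W1 ((P[|A ⁻¹' {false}]).map Z) ((P[|A ⁻¹' {true}]).map Z)) := by
  classical
  obtain ⟨z₀, hmom⟩ := hmom
  set F := A ⁻¹' {false} with hF
  set T := A ⁻¹' {true} with hT
  have hFm : MeasurableSet F := hA (measurableSet_singleton _)
  have hTm : MeasurableSet T := hA (measurableSet_singleton _)
  have hTc : T = Fᶜ := by
    ext ω; cases h : A ω <;> simp [hF, hT, h]
  have hPF0 : P F ≠ 0 := hA0.ne'
  have hPFtop : P F ≠ ⊤ := measure_ne_top _ _
  have hPT : P T = 1 - P F := by rw [hTc, prob_compl_eq_one_sub hFm]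
  have hPT0 : P T ≠ 0 := by
    rw [hPT]
    simp only [ne_eq, tsub_eq_zero_iff_le, not_le]
    exact hA1
  have hPTtop : P T ≠ ⊤ := measure_ne_top _ _
  haveI h0 : IsProbabilityMeasure (P[|F]) := cond_isProbabilityMeasure hPF0
  haveI h1 : IsProbabilityMeasure (P[|T]) := cond_isProbabilityMeasure hPT0
  set μ0 := (P[|F]).map Z with hμ0
  set μ1 := (P[|T]).map Z with hμ1
  haveI : IsProbabilityMeasure μ0 := Measure.isProbabilityMeasure_map hZ.aemeasurable
  haveI : IsProbabilityMeasure μ1 := Measure.isProbabilityMeasure_map hZ.aemeasurable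
  -- integrability of the distance under the conditional laws
  have hdist : ∀ (s : Set Ω), P s ≠ 0 →
      Integrable (fun z => dist z z₀) ((P[|s]).map Z) := by
    intro s hs
    have h1 : Integrable (fun ω => dist (Z ω) z₀) (P.restrict s) :=
      hmom.restrict
    have h2 : Integrable (fun ω => dist (Z ω) z₀) (P[|s]) := by
      rw [ProbabilityTheory.cond]
      exact h1.smul_measure (ENNReal.inv_ne_top.mpr hs)
    exact (integrable_map_measure
      ((continuous_id.dist continuous_const).aestronglyMeasurable)
      hZ.aemeasurable).mpr h2
  have hd0 : Integrable (fun z => dist z z₀) μ0 := hdist F hPF0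
  have hd1 : Integrable (fun z => dist z z₀) μ1 := hdist T hPT0
  -- boundedness of the W1 defining family
  have bdd : BddAbove (Set.range fun φ : {φ : Ω' → ℝ // LipschitzWith 1 φ} =>
      |∫ z, φ.1 z ∂μ0 - ∫ z, φ.1 z ∂μ1|) := by
    refine ⟨(∫ z, dist z z₀ ∂μ0) + ∫ z, dist z z₀ ∂μ1, ?_⟩
    rintro x ⟨φ, rfl⟩
    exact lip_diff_bound μ0 μ1 z₀ hd0 hd1 φ.2
  set W := W1 μ0 μ1 with hWdef
  have hWs : (⨆ φ : {φ : Ω' → ℝ // LipschitzWith 1 φ},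
      |∫ z, φ.1 z ∂μ0 - ∫ z, φ.1 z ∂μ1|) = W := rfl
  have hWnonneg : (0:ℝ) ≤ W := by
    have := le_ciSup bdd ⟨fun _ => (0:ℝ), (LipschitzWith.const (0:ℝ)).weaken zero_le_one⟩
    rw [hWs] at this
    simpa using this
  have hfm : Measurable f := hf.continuous.measurable
  set I0 := ∫ x, f x ∂μ0 with hI0def
  set I1 := ∫ x, f x ∂μ1 with hI1def
  -- the Lipschitz bound : I1 - I0 ≤ C * W
  have hkey : I1 - I0 ≤ (C : ℝ) * W := by
    by_cases hC : C = 0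
    · have hconst : f = fun _ => f z₀ := by
        funext x
        have := hf.dist_le_mul x z₀
        rw [hC] at this
        simpa using this
      have e0 : I0 = f z₀ := by rw [hI0def, hconst]; simp
      have e1 : I1 = f z₀ := by rw [hI1def, hconst]; simp
      rw [e0, e1, hC]; simp
    · have hCpos : (0:ℝ) < (C:ℝ) := by positivity
      set φ : Ω' → ℝ := fun x => (C:ℝ)⁻¹ * f x with hφdef
      have hφ : LipschitzWith 1 φ := by
        rw [lipschitzWith_iff_dist_le_mul]
        intro x y
        have h := hf.dist_le_mul x y
        rw [Real.dist_eq] at h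
        rw [Real.dist_eq]
        have habs : |φ x - φ y| = (C:ℝ)⁻¹ * |f x - f y| := by
          rw [hφdef]
          rw [← mul_sub, abs_mul, abs_of_nonneg (by positivity : (0:ℝ) ≤ (C:ℝ)⁻¹)]
        rw [habs]
        push_cast
        rw [one_mul]
        calc (C:ℝ)⁻¹ * |f x - f y| ≤ (C:ℝ)⁻¹ * ((C:ℝ) * dist x y) := by
              apply mul_le_mul_of_nonneg_left h (by positivity)
          _ = dist x y := by field_simp
      have hb := le_ciSup bdd ⟨φ, hφ⟩
      rw [hWs] at hb
      have e0 : ∫ z, φ z ∂μ0 = (C:ℝ)⁻¹ * I0 := by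
        rw [hφdef, hI0def]; exact MeasureTheory.integral_const_mul _ _
      have e1 : ∫ z, φ z ∂μ1 = (C:ℝ)⁻¹ * I1 := by
        rw [hφdef, hI1def]; exact MeasureTheory.integral_const_mul _ _
      simp only [e0, e1] at hb
      have : (C:ℝ)⁻¹ * |I0 - I1| ≤ W := by
        calc (C:ℝ)⁻¹ * |I0 - I1| = |(C:ℝ)⁻¹ * I0 - (C:ℝ)⁻¹ * I1| := by
              rw [← mul_sub, abs_mul, abs_of_nonneg (by positivity : (0:ℝ) ≤ (C:ℝ)⁻¹)]
          _ ≤ W := hb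
      have h2 : |I0 - I1| ≤ (C:ℝ) * W := by
        rw [← div_le_iff₀' hCpos] at *
        calc |I0 - I1| / (C:ℝ) = (C:ℝ)⁻¹ * |I0 - I1| := by ring
          _ ≤ W := this
      calc I1 - I0 ≤ |I0 - I1| := by rw [abs_sub_comm]; exact le_abs_self _
        _ ≤ (C:ℝ) * W := h2
  -- identify the integrals with measures of sets
  have hs1m : MeasurableSet {x | f x = 1} := hfm (measurableSet_singleton 1)
  have hfeq : ∀ x, f x = Set.indicator {x | f x = 1} (1 : Ω' → ℝ) x := by
    intro x
    rcases hf01 x with h | h <;> simp [Set.indicator_apply, h]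
  have hInt : ∀ (ρ : Measure Ω'), ∫ x, f x ∂ρ = (ρ {x | f x = 1}).toReal := by
    intro ρ
    rw [integral_congr_ae (ae_of_all _ hfeq)]
    exact integral_indicator_one hs1m
  set S0 : Set Ω' := {x | f x ≠ 0} with hS0
  set S1 : Set Ω' := {x | f x ≠ 1} with hS1
  have hS0eq : S0 = {x | f x = 1} := by
    ext x; rcases hf01 x with h | h <;> simp [hS0, h]
  have hS1eq : S1 = {x | f x = 1}ᶜ := by
    ext x; simp [hS1]
  have hS0m : MeasurableSet S0 := hS0eq ▸ hs1m
  have hS1m : MeasurableSet S1 := hS1eq ▸ hs1m.compl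
  have hq0 : (μ0 S0).toReal = I0 := by
    rw [hS0eq, hI0def, hInt μ0]
  have hq1 : (μ1 S1).toReal = 1 - I1 := by
    rw [hS1eq, prob_compl_eq_one_sub hs1m, hI1def, hInt μ1,
      ENNReal.toReal_sub_of_le prob_le_one ENNReal.one_ne_top, ENNReal.toReal_one]
  -- decompose the error event
  set E : Set Ω := {ω | f (Z ω) ≠ (if A ω then (1:ℝ) else 0)} with hE
  have hEeq : E = (F ∩ Z ⁻¹' S0) ∪ (T ∩ Z ⁻¹' S1) := by
    ext ω
    cases h : A ω <;> simp [hE, hF, hT, h, hS0, hS1]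
  have hdisj : Disjoint (F ∩ Z ⁻¹' S0) (T ∩ Z ⁻¹' S1) := by
    rw [hTc]
    exact Set.disjoint_of_subset Set.inter_subset_left Set.inter_subset_left
      disjoint_compl_right
  have hPE : P E = P (F ∩ Z ⁻¹' S0) + P (T ∩ Z ⁻¹' S1) := by
    rw [hEeq, measure_union hdisj (hTm.inter (hZ hS1m))]
  have hcond : ∀ (s : Set Ω), MeasurableSet s → P s ≠ 0 → ∀ (u : Set Ω'),
      MeasurableSet u → P (s ∩ Z ⁻¹' u) = P s * ((P[|s]).map Z) u := by
    intro s hsm hs u hum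
    rw [Measure.map_apply hZ hum, ProbabilityTheory.cond_apply hsm,
      ← mul_assoc, ENNReal.mul_inv_cancel hs (measure_ne_top _ _), one_mul]
  have hPE' : (P E).toReal =
      (P F).toReal * (μ0 S0).toReal + (P T).toReal * (μ1 S1).toReal := by
    rw [hPE, ENNReal.toReal_add (measure_ne_top _ _) (measure_ne_top _ _),
      hcond F hFm hPF0 S0 hS0m, hcond T hTm hPT0 S1 hS1m,
      ENNReal.toReal_mul, ENNReal.toReal_mul]
  -- real arithmetic
  set α := (P F).toReal with hα
  have hPTr : (P T).toReal = 1 - α := by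
    rw [hPT, ENNReal.toReal_sub_of_le hA1.le ENNReal.one_ne_top, ENNReal.toReal_one]
  have hα0 : 0 < α := ENNReal.toReal_pos hPF0 hPFtop
  have hα1 : α < 1 := by
    have := (ENNReal.toReal_lt_toReal hPFtop ENNReal.one_ne_top).mpr hA1
    simpa using this
  have hq0' : (0:ℝ) ≤ (μ0 S0).toReal := ENNReal.toReal_nonneg
  have hq1' : (0:ℝ) ≤ (μ1 S1).toReal := ENNReal.toReal_nonneg
  rw [ge_iff_le]
  rw [hPE', hPTr]
  have hm1 : min α (1 - α) ≤ α := min_le_left _ _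
  have hm2 : min α (1 - α) ≤ 1 - α := min_le_right _ _
  have hm0 : 0 ≤ min α (1 - α) := le_min hα0.le (by linarith)
  have hsum : (μ0 S0).toReal + (μ1 S1).toReal ≥ 1 - (C:ℝ) * W := by
    rw [hq0, hq1]; linarith
  nlinarith [mul_nonneg hm0 hq0', mul_nonneg hm0 hq1',
    mul_le_mul_of_nonneg_right hm1 hq0', mul_le_mul_of_nonneg_right hm2 hq1',
    mul_le_mul_of_nonneg_left hsum hm0]
end
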